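/- arXiv:2308.13025 — 7 statements merged into one kernel-verified Lean document; each statement's English description precedes it below -/
import Mathlib

section
/- For any pair (m, r) with m a positive integer and r ∈ {0, 1, …, m}, there exist a positive integer l and orthogonal matrices A_1, …, A_m ∈ O(l) such that A_iA_j + A_jA_i = 2η_{ij}E_l for all i, j ∈ {1, …, m}, where (η_{ij}) := J_{r,m−r}. -/
open Matrix

noncomputable section

/-- Entries of the signature matrix `J_{r,m-r}`, with 1-based indices:
`η_{ii} = -1` for `1 ≤ i ≤ r` and `η_{ii} = 1` for `r < i`; off-diagonal entries vanish. -/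
def cliffEta (r i j : ℕ) : ℝ :=
  if i = j then (if i ≤ r then -1 else 1) else 0

/-- The matrix `J_{s,n-s} = diag(-E_s, E_{n-s})`. -/
def psJ (n s : ℕ) : Matrix (Fin n) (Fin n) ℝ :=
  Matrix.diagonal fun i => if (i : ℕ) < s then (-1 : ℝ) else 1

/-- The pseudo-inner product `⟨u, v⟩ = uᵀ J_{s,n-s} v` of `ℝ^n_s`. -/
def psInner (n s : ℕ) (u v : Fin n → ℝ) : ℝ :=
  u ⬝ᵥ ((psJ n s) *ᵥ v)

/-- A Clifford system of signature `(m, r)` on `ℝ^{2l}_s`, indexed by `1, …, m`: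
each `P i` is symmetric with respect to the pseudo-inner product, and
`P i * P j + P j * P i = 2 η_{ij} E_{2l}`. -/
def IsCliffordSystem (l s m r : ℕ)
    (P : ℕ → Matrix (Fin (2 * l)) (Fin (2 * l)) ℝ) : Prop :=
  (∀ i ∈ Finset.Icc 1 m, (P i)ᵀ = psJ (2 * l) s * P i * psJ (2 * l) s) ∧
  (∀ i ∈ Finset.Icc 1 m, ∀ j ∈ Finset.Icc 1 m,
    P i * P j + P j * P i
      = (2 * cliffEta r i j) • (1 : Matrix (Fin (2 * l)) (Fin (2 * l)) ℝ))

namespace CliffAux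

open Kronecker

/-- Pauli-type matrix `σ₁`. -/
def sig1 : Matrix (Fin 2) (Fin 2) ℝ := !![0, 1; 1, 0]

/-- Pauli-type matrix `σ₃`. -/
def sig3 : Matrix (Fin 2) (Fin 2) ℝ := !![1, 0; 0, -1]

/-- Rotation by 90°. -/
def eps : Matrix (Fin 2) (Fin 2) ℝ := !![0, -1; 1, 0]

lemma sig1_sq : sig1 * sig1 = 1 := by
  ext i j
  fin_cases i <;> fin_cases j <;>
    simp [sig1, Matrix.mul_apply, Fin.sum_univ_two, Matrix.one_apply]

lemma sig3_sq : sig3 * sig3 = 1 := by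
  ext i j
  fin_cases i <;> fin_cases j <;>
    simp [sig3, Matrix.mul_apply, Fin.sum_univ_two, Matrix.one_apply]

lemma eps_sq : eps * eps = -1 := by
  ext i j
  fin_cases i <;> fin_cases j <;>
    simp [eps, Matrix.mul_apply, Fin.sum_univ_two, Matrix.one_apply]

lemma sig1_anticomm : sig1 * sig3 + sig3 * sig1 = 0 := by
  ext i j
  fin_cases i <;> fin_cases j <;>
    simp [sig1, sig3, Matrix.mul_apply, Fin.sum_univ_two]

lemma eps_anticomm : eps * sig3 + sig3 * eps = 0 := by
  ext i j
  fin_cases i <;> fin_cases j <;>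
    simp [eps, sig3, Matrix.mul_apply, Fin.sum_univ_two]

lemma sig1_transpose : sig1ᵀ = sig1 := by
  ext i j
  fin_cases i <;> fin_cases j <;> simp [sig1]

lemma sig3_transpose : sig3ᵀ = sig3 := by
  ext i j
  fin_cases i <;> fin_cases j <;> simp [sig3]

lemma eps_transpose : epsᵀ = -eps := by
  ext i j
  fin_cases i <;> fin_cases j <;> simp [eps]

lemma cliffEta_diag (r i : ℕ) : cliffEta r i i = if i ≤ r then -1 else 1 := by
  simp [cliffEta]

lemma cliffEta_off (r : ℕ) {i j : ℕ} (h : i ≠ j) : cliffEta r i j = 0 := by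
  simp [cliffEta, h]

/-- The key inductive construction. -/
lemma key (r k : ℕ) : ∃ l : ℕ, 0 < l ∧ ∃ A : ℕ → Matrix (Fin l) (Fin l) ℝ,
    (∀ i ∈ Finset.Icc 1 k, (A i)ᵀ = cliffEta r i i • A i) ∧
    (∀ i ∈ Finset.Icc 1 k, ∀ j ∈ Finset.Icc 1 k,
      A i * A j + A j * A i = (2 * cliffEta r i j) • (1 : Matrix (Fin l) (Fin l) ℝ)) := by
  induction k with
  | zero => exact ⟨1, one_pos, fun _ => 1, by simp, by simp⟩
  | succ k ih =>
    obtain ⟨l, hl, A, hT, hR⟩ := ih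
    -- squares of the generators
    have hsq : ∀ i ∈ Finset.Icc 1 k, A i * A i = cliffEta r i i • 1 := by
      intro i hi
      have := hR i hi i hi
      have h2 : (2 : ℝ) • (A i * A i) = (2 : ℝ) • (cliffEta r i i • (1 : Matrix (Fin l) (Fin l) ℝ)) := by
        rw [two_smul, this, mul_smul]
      exact smul_right_injective _ (two_ne_zero) h2
    set X : Matrix (Fin 2) (Fin 2) ℝ := if k + 1 ≤ r then eps else sig1 with hX
    have hXsq : X * X = cliffEta r (k+1) (k+1) • 1 := by
      rw [hX, cliffEta_diag]
      by_cases h : k + 1 ≤ r <;> simp [h, eps_sq, sig1_sq]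
    have hXac : X * sig3 + sig3 * X = 0 := by
      rw [hX]; by_cases h : k + 1 ≤ r <;> simp [h, eps_anticomm, sig1_anticomm]
    have hXT : Xᵀ = cliffEta r (k+1) (k+1) • X := by
      rw [hX, cliffEta_diag]
      by_cases h : k + 1 ≤ r <;> simp [h, eps_transpose, sig1_transpose]
    -- the new family on Fin l × Fin 2
    set B : ℕ → Matrix (Fin l × Fin 2) (Fin l × Fin 2) ℝ :=
      fun i => if i = k + 1 then (1 : Matrix (Fin l) (Fin l) ℝ) ⊗ₖ X else A i ⊗ₖ sig3 with hB
    have hBT : ∀ i ∈ Finset.Icc 1 (k+1), (B i)ᵀ = cliffEta r i i • B i := by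
      intro i hi
      by_cases h : i = k + 1
      · subst h
        simp only [hB, if_pos rfl]
        rw [← Matrix.kroneckerMap_transpose, Matrix.transpose_one, hXT, Matrix.kronecker_smul]
      · have hi' : i ∈ Finset.Icc 1 k := by
          simp only [Finset.mem_Icc] at hi ⊢
          exact ⟨hi.1, by omega⟩
        simp only [hB, if_neg h]
        rw [← Matrix.kroneckerMap_transpose, sig3_transpose, hT i hi', Matrix.smul_kronecker]
    have hBR : ∀ i ∈ Finset.Icc 1 (k+1), ∀ j ∈ Finset.Icc 1 (k+1),
        B i * B j + B j * B i = (2 * cliffEta r i j) • (1 : Matrix (Fin l × Fin 2) (Fin l × Fin 2) ℝ) := by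
      have hone : (1 : Matrix (Fin l × Fin 2) (Fin l × Fin 2) ℝ)
          = (1 : Matrix (Fin l) (Fin l) ℝ) ⊗ₖ (1 : Matrix (Fin 2) (Fin 2) ℝ) :=
        (Matrix.one_kronecker_one).symm
      intro i hi j hj
      by_cases h : i = k + 1 <;> by_cases h' : j = k + 1
      · subst h; subst h'
        simp only [hB, if_pos rfl]
        rw [← Matrix.mul_kronecker_mul, Matrix.one_mul, hXsq, Matrix.kronecker_smul, hone,
          cliffEta_diag]
        by_cases hc : k + 1 ≤ r <;> simp [hc] <;> module
      · have hj' : j ∈ Finset.Icc 1 k := by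
          simp only [Finset.mem_Icc] at hj ⊢; exact ⟨hj.1, by omega⟩
        subst h
        simp only [hB, if_pos rfl, if_neg h']
        rw [← Matrix.mul_kronecker_mul, ← Matrix.mul_kronecker_mul, Matrix.one_mul,
          Matrix.mul_one, ← Matrix.kronecker_add, hXac, Matrix.kronecker_zero,
          cliffEta_off r (by omega : (k+1 : ℕ) ≠ j)]
        simp
      · have hi' : i ∈ Finset.Icc 1 k := by
          simp only [Finset.mem_Icc] at hi ⊢; exact ⟨hi.1, by omega⟩
        subst h'
        simp only [hB, if_pos rfl, if_neg h]
        rw [← Matrix.mul_kronecker_mul, ← Matrix.mul_kronecker_mul, Matrix.one_mul,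
          Matrix.mul_one, ← Matrix.kronecker_add, add_comm (sig3 * X), hXac,
          Matrix.kronecker_zero, cliffEta_off r (by omega : i ≠ (k+1 : ℕ))]
        simp
      · have hi' : i ∈ Finset.Icc 1 k := by
          simp only [Finset.mem_Icc] at hi ⊢; exact ⟨hi.1, by omega⟩
        have hj' : j ∈ Finset.Icc 1 k := by
          simp only [Finset.mem_Icc] at hj ⊢; exact ⟨hj.1, by omega⟩
        simp only [hB, if_neg h, if_neg h']
        rw [← Matrix.mul_kronecker_mul, ← Matrix.mul_kronecker_mul, sig3_sq,
          ← Matrix.add_kronecker, hR i hi' j hj', Matrix.smul_kronecker, hone]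
    -- transfer along the equivalence Fin l × Fin 2 ≃ Fin (l * 2)
    refine ⟨l * 2, by positivity, fun i => Matrix.reindexAlgEquiv ℝ ℝ finProdFinEquiv (B i), ?_, ?_⟩
    · intro i hi
      dsimp only
      rw [Matrix.reindexAlgEquiv_apply, Matrix.transpose_reindex, hBT i hi]
      simp [Matrix.reindex_apply, Matrix.submatrix_smul]
    · intro i hi j hj
      dsimp only; rw [← _root_.map_mul, ← _root_.map_mul, ← map_add, hBR i hi j hj, _root_.map_smul]; rw [_root_.map_one]

end CliffAux

/-- For any pair `(m, r)` with `m` a positive integer and `r ∈ {0, …, m}`,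
there exist a positive integer `l` and orthogonal matrices `A_1, …, A_m ∈ O(l)` with
`A_i A_j + A_j A_i = 2 η_{ij} E_l`, where `(η_{ij}) = J_{r,m-r}`. -/
theorem exists_orthogonal_anticommuting_family (m r : ℕ) (hm : 0 < m) (hr : r ≤ m) :
    ∃ l : ℕ, 0 < l ∧ ∃ A : ℕ → Matrix (Fin l) (Fin l) ℝ,
      (∀ i ∈ Finset.Icc 1 m, (A i)ᵀ * A i = 1) ∧
      (∀ i ∈ Finset.Icc 1 m, ∀ j ∈ Finset.Icc 1 m,
        A i * A j + A j * A i = (2 * cliffEta r i j) • (1 : Matrix (Fin l) (Fin l) ℝ)) := by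
  obtain ⟨l, hl, A, hT, hR⟩ := CliffAux.key r m
  have hsq : ∀ i ∈ Finset.Icc 1 m, A i * A i = cliffEta r i i • 1 := by
    intro i hi
    have := hR i hi i hi
    have h2 : (2 : ℝ) • (A i * A i) = (2 : ℝ) • (cliffEta r i i • (1 : Matrix (Fin l) (Fin l) ℝ)) := by
      rw [two_smul, this, mul_smul]
    exact smul_right_injective _ (two_ne_zero) h2
  refine ⟨l, hl, A, ?_, hR⟩
  intro i hi
  rw [hT i hi, Matrix.smul_mul, hsq i hi, smul_smul, CliffAux.cliffEta_diag]
  by_cases h : i ≤ r <;> simp [h]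
end
end

section
/- Let m be a positive integer, r ∈ {0, 1, …, m}, and suppose A_1, …, A_m ∈ O(l) satisfy A_iA_j + A_jA_i = 2η_{ij}E_l for all i, j, where (η_{ij}) := J_{r,m−r}. Then there exist B_1, …, B_{m+2} ∈ O(2l) satisfying B_iB_j + B_jB_i = 2η'_{ij}E_{2l} for all i, j ∈ {1, …, m+2}, where (η'_{ij}) := J_{r+1,(m+2)−(r+1)}. -/
open Matrix

noncomputable section

/-- Doubling a matrix into a `2×2` block matrix of size `2l`. -/
def blk (l : ℕ) (a b c d : Matrix (Fin l) (Fin l) ℝ) : Matrix (Fin (2*l)) (Fin (2*l)) ℝ :=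
  Matrix.reindexAlgEquiv ℝ ℝ (finSumFinEquiv.trans (finCongr (two_mul l).symm))
    (Matrix.fromBlocks a b c d)

lemma blk_mul {l : ℕ} (a b c d a' b' c' d' : Matrix (Fin l) (Fin l) ℝ) :
    blk l a b c d * blk l a' b' c' d' =
      blk l (a*a' + b*c') (a*b' + b*d') (c*a' + d*c') (c*b' + d*d') := by
  simp only [blk]; rw [← _root_.map_mul, Matrix.fromBlocks_multiply]

lemma blk_add {l : ℕ} (a b c d a' b' c' d' : Matrix (Fin l) (Fin l) ℝ) :
    blk l a b c d + blk l a' b' c' d' = blk l (a+a') (b+b') (c+c') (d+d') := by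
  simp only [blk, ← Matrix.fromBlocks_add, Matrix.reindexAlgEquiv_apply]; rfl

lemma blk_one {l : ℕ} : blk l 1 0 0 1 = 1 := by
  simp only [blk]; rw [Matrix.fromBlocks_one, _root_.map_one]

lemma blk_smul {l : ℕ} (x : ℝ) (a b c d : Matrix (Fin l) (Fin l) ℝ) :
    x • blk l a b c d = blk l (x•a) (x•b) (x•c) (x•d) := by
  simp only [blk, ← Matrix.fromBlocks_smul, Matrix.reindexAlgEquiv_apply]; rfl

lemma blk_transpose {l : ℕ} (a b c d : Matrix (Fin l) (Fin l) ℝ) :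
    (blk l a b c d)ᵀ = blk l aᵀ cᵀ bᵀ dᵀ := by
  simp [blk, Matrix.transpose_reindex, Matrix.fromBlocks_transpose]


lemma blk_congr {l : ℕ} {a b c d a' b' c' d' : Matrix (Fin l) (Fin l) ℝ}
    (ha : a = a') (hb : b = b') (hc : c = c') (hd : d = d') :
    blk l a b c d = blk l a' b' c' d' := by
  rw [ha, hb, hc, hd]

/-- The doubled Clifford family. -/
def stepB (m l : ℕ) (A : ℕ → Matrix (Fin l) (Fin l) ℝ) (k : ℕ) :
    Matrix (Fin (2 * l)) (Fin (2 * l)) ℝ :=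
  if k = 1 then blk l 0 1 (-1) 0
  else if k = m + 2 then blk l 0 1 1 0
  else blk l (A (k-1)) 0 0 (-(A (k-1)))

lemma stepB_one (m l : ℕ) (A : ℕ → Matrix (Fin l) (Fin l) ℝ) :
    stepB m l A 1 = blk l 0 1 (-1) 0 := by simp [stepB]

lemma stepB_top (m l : ℕ) (A : ℕ → Matrix (Fin l) (Fin l) ℝ) :
    stepB m l A (m + 2) = blk l 0 1 1 0 := by
  rw [stepB, if_neg (by omega), if_pos rfl]

lemma stepB_mid (m l : ℕ) (A : ℕ → Matrix (Fin l) (Fin l) ℝ) {k : ℕ}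
    (h1 : k ≠ 1) (h2 : k ≠ m + 2) :
    stepB m l A k = blk l (A (k-1)) 0 0 (-(A (k-1))) := by
  rw [stepB, if_neg h1, if_neg h2]

/-- from a family for `(m, r)` on `O(l)` one obtains a family for
`(m+2, r+1)` on `O(2l)`. -/
theorem step_up_signature (m r l : ℕ) (hm : 0 < m) (hr : r ≤ m) (hl : 0 < l)
    (A : ℕ → Matrix (Fin l) (Fin l) ℝ)
    (hAo : ∀ i ∈ Finset.Icc 1 m, (A i)ᵀ * A i = 1)
    (hAc : ∀ i ∈ Finset.Icc 1 m, ∀ j ∈ Finset.Icc 1 m,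
      A i * A j + A j * A i = (2 * cliffEta r i j) • (1 : Matrix (Fin l) (Fin l) ℝ)) :
    ∃ B : ℕ → Matrix (Fin (2 * l)) (Fin (2 * l)) ℝ,
      (∀ i ∈ Finset.Icc 1 (m + 2), (B i)ᵀ * B i = 1) ∧
      (∀ i ∈ Finset.Icc 1 (m + 2), ∀ j ∈ Finset.Icc 1 (m + 2),
        B i * B j + B j * B i
          = (2 * cliffEta (r + 1) i j) • (1 : Matrix (Fin (2 * l)) (Fin (2 * l)) ℝ)) := by
  have key : ∀ x : ℝ, x • (1 : Matrix (Fin (2*l)) (Fin (2*l)) ℝ) = blk l (x • 1) 0 0 (x • 1) := by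
    intro x
    rw [← blk_one, blk_smul, smul_zero]
  refine ⟨stepB m l A, ?_, ?_⟩
  · intro i hi
    simp only [Finset.mem_Icc] at hi
    by_cases h1 : i = 1
    · rw [h1, stepB_one, blk_transpose, blk_mul]
      rw [← blk_one]
      exact blk_congr (by simp) (by simp) (by simp) (by simp)
    · by_cases h2 : i = m + 2
      · rw [h2, stepB_top, blk_transpose, blk_mul, ← blk_one]
        exact blk_congr (by simp) (by simp) (by simp) (by simp)
      · have hmem : i - 1 ∈ Finset.Icc 1 m := by simp only [Finset.mem_Icc]; omega
        rw [stepB_mid m l A h1 h2, blk_transpose, blk_mul, ← blk_one]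
        refine blk_congr ?_ (by simp) (by simp) ?_
        · simpa using hAo _ hmem
        · simpa using hAo _ hmem
  · intro i hi j hj
    simp only [Finset.mem_Icc] at hi hj
    by_cases h1 : i = 1
    · by_cases h1' : j = 1
      · subst h1 h1'
        rw [stepB_one, blk_mul, key]
        have heta : cliffEta (r+1) 1 1 = -1 := by simp [cliffEta]
        rw [heta, blk_add]
        refine blk_congr ?_ (by simp) (by simp) ?_ <;> · simp; module
      · by_cases h2' : j = m + 2
        · subst h1 h2'
          rw [stepB_one, stepB_top, blk_mul, blk_mul, key, blk_add]
          have heta : cliffEta (r+1) 1 (m+2) = 0 := by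
            unfold cliffEta; split_ifs <;> first | rfl | omega
          rw [heta]
          exact blk_congr (by simp) (by simp) (by simp) (by simp)
        · subst h1
          rw [stepB_one, stepB_mid m l A h1' h2', blk_mul, blk_mul, key, blk_add]
          have heta : cliffEta (r+1) 1 j = 0 := by
            unfold cliffEta; split_ifs <;> first | rfl | omega
          rw [heta]
          exact blk_congr (by simp) (by simp) (by simp) (by simp)
    · by_cases h2 : i = m + 2
      · by_cases h1' : j = 1
        · subst h2 h1'
          rw [stepB_one, stepB_top, blk_mul, blk_mul, key, blk_add]
          have heta : cliffEta (r+1) (m+2) 1 = 0 := by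
            unfold cliffEta; split_ifs <;> first | rfl | omega
          rw [heta]
          exact blk_congr (by simp) (by simp) (by simp) (by simp)
        · by_cases h2' : j = m + 2
          · subst h2 h2'
            rw [stepB_top, blk_mul, key, blk_add]
            have heta : cliffEta (r+1) (m+2) (m+2) = 1 := by
              unfold cliffEta; split_ifs <;> first | rfl | omega
            rw [heta]
            refine blk_congr ?_ (by simp) (by simp) ?_ <;> · simp; module
          · subst h2
            rw [stepB_top, stepB_mid m l A h1' h2', blk_mul, blk_mul, key, blk_add]
            have heta : cliffEta (r+1) (m+2) j = 0 := by
              unfold cliffEta; split_ifs <;> first | rfl | omega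
            rw [heta]
            exact blk_congr (by simp) (by simp) (by simp) (by simp)
      · by_cases h1' : j = 1
        · subst h1'
          rw [stepB_one, stepB_mid m l A h1 h2, blk_mul, blk_mul, key, blk_add]
          have heta : cliffEta (r+1) i 1 = 0 := by
            unfold cliffEta; split_ifs <;> first | rfl | omega
          rw [heta]
          exact blk_congr (by simp) (by simp) (by simp) (by simp)
        · by_cases h2' : j = m + 2
          · subst h2'
            rw [stepB_top, stepB_mid m l A h1 h2, blk_mul, blk_mul, key, blk_add]
            have heta : cliffEta (r+1) i (m+2) = 0 := by
              unfold cliffEta; split_ifs <;> first | rfl | omega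
            rw [heta]
            exact blk_congr (by simp) (by simp) (by simp) (by simp)
          · rw [stepB_mid m l A h1 h2, stepB_mid m l A h1' h2',
              blk_mul, blk_mul, key, blk_add]
            have hi' : i - 1 ∈ Finset.Icc 1 m := by simp only [Finset.mem_Icc]; omega
            have hj' : j - 1 ∈ Finset.Icc 1 m := by simp only [Finset.mem_Icc]; omega
            have hAC := hAc _ hi' _ hj'
            have heta : cliffEta (r+1) i j = cliffEta r (i-1) (j-1) := by
              unfold cliffEta; split_ifs <;> first | rfl | omega
            rw [heta]
            refine blk_congr ?_ (by simp) (by simp) ?_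
            · simpa using hAC
            · rw [← hAC]; simp [add_comm]
end
end

section
/- Let m be a positive integer and suppose A_1, …, A_m ∈ O(l) satisfy A_iA_j + A_jA_i = 2η_{ij}E_l for all i, j, where (η_{ij}) := J_{0,m} = E_m (i.e. the A_i pairwise anticommute and square to E_l). Then there exist B_1, …, B_{m+2} ∈ O(4l) satisfying B_iB_j + B_jB_i = 2η'_{ij}E_{4l} for all i, j ∈ {1, …, m+2}, where (η'_{ij}) := J_{m+2,0} = −E_{m+2} (i.e. the B_j pairwise anticommute and square to −E_{4l}). -/
open Matrix Kronecker

noncomputable section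

/-- Left multiplication by the quaternion `i` on `ℝ^4`. -/
def quatLi : Matrix (Fin 4) (Fin 4) ℝ :=
  !![0,-1,0,0; 1,0,0,0; 0,0,0,-1; 0,0,1,0]

/-- Left multiplication by the quaternion `j` on `ℝ^4`. -/
def quatLj : Matrix (Fin 4) (Fin 4) ℝ :=
  !![0,0,-1,0; 0,0,0,1; 1,0,0,0; 0,-1,0,0]

/-- Left multiplication by the quaternion `k` on `ℝ^4`. -/
def quatLk : Matrix (Fin 4) (Fin 4) ℝ :=
  !![0,0,0,-1; 0,0,-1,0; 0,1,0,0; 1,0,0,0]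

lemma quatLi_sq : quatLi * quatLi = -1 := by
  ext i j
  fin_cases i <;> fin_cases j <;>
    simp [quatLi, Matrix.mul_apply, Fin.sum_univ_four, Matrix.one_apply, Matrix.vecHead, Matrix.vecTail, Function.comp]

lemma quatLj_sq : quatLj * quatLj = -1 := by
  ext i j
  fin_cases i <;> fin_cases j <;>
    simp [quatLj, Matrix.mul_apply, Fin.sum_univ_four, Matrix.one_apply, Matrix.vecHead, Matrix.vecTail, Function.comp]

lemma quatLk_sq : quatLk * quatLk = -1 := by
  ext i j
  fin_cases i <;> fin_cases j <;>
    simp [quatLk, Matrix.mul_apply, Fin.sum_univ_four, Matrix.one_apply, Matrix.vecHead, Matrix.vecTail, Function.comp]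

lemma quatLi_Lj : quatLi * quatLj + quatLj * quatLi = 0 := by
  ext i j
  fin_cases i <;> fin_cases j <;>
    simp [quatLi, quatLj, Matrix.mul_apply, Fin.sum_univ_four, Matrix.vecHead, Matrix.vecTail, Function.comp]

lemma quatLi_Lk : quatLi * quatLk + quatLk * quatLi = 0 := by
  ext i j
  fin_cases i <;> fin_cases j <;>
    simp [quatLi, quatLk, Matrix.mul_apply, Fin.sum_univ_four, Matrix.vecHead, Matrix.vecTail, Function.comp]

lemma quatLj_Lk : quatLj * quatLk + quatLk * quatLj = 0 := by
  ext i j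
  fin_cases i <;> fin_cases j <;>
    simp [quatLj, quatLk, Matrix.mul_apply, Fin.sum_univ_four, Matrix.vecHead, Matrix.vecTail, Function.comp]

lemma quatLk_Li : quatLk * quatLi + quatLi * quatLk = 0 := by
  rw [add_comm]; exact quatLi_Lk

lemma quatLk_Lj : quatLk * quatLj + quatLj * quatLk = 0 := by
  rw [add_comm]; exact quatLj_Lk

lemma quatLj_Li : quatLj * quatLi + quatLi * quatLj = 0 := by
  rw [add_comm]; exact quatLi_Lj

lemma quatLi_orth : quatLiᵀ * quatLi = 1 := by
  ext i j
  fin_cases i <;> fin_cases j <;>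
    simp [quatLi, Matrix.mul_apply, Fin.sum_univ_four, Matrix.one_apply, Matrix.vecHead,
      Matrix.vecTail, Function.comp]

lemma quatLj_orth : quatLjᵀ * quatLj = 1 := by
  ext i j
  fin_cases i <;> fin_cases j <;>
    simp [quatLj, Matrix.mul_apply, Fin.sum_univ_four, Matrix.one_apply, Matrix.vecHead,
      Matrix.vecTail, Function.comp]

lemma quatLk_orth : quatLkᵀ * quatLk = 1 := by
  ext i j
  fin_cases i <;> fin_cases j <;>
    simp [quatLk, Matrix.mul_apply, Fin.sum_univ_four, Matrix.one_apply, Matrix.vecHead,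
      Matrix.vecTail, Function.comp]

lemma neg_one_kron_one {l : ℕ} :
    ((-1 : Matrix (Fin 4) (Fin 4) ℝ) ⊗ₖ (1 : Matrix (Fin l) (Fin l) ℝ)) = -1 := by
  rw [show (-1 : Matrix (Fin 4) (Fin 4) ℝ) = (-1 : ℝ) • 1 by simp,
    Matrix.smul_kronecker, Matrix.one_kronecker_one]
  simp

lemma kron_orth {l : ℕ} (g : Matrix (Fin 4) (Fin 4) ℝ) (P : Matrix (Fin l) (Fin l) ℝ)
    (hg : gᵀ * g = 1) (hP : Pᵀ * P = 1) : (g ⊗ₖ P)ᵀ * (g ⊗ₖ P) = 1 := by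
  rw [← Matrix.kroneckerMap_transpose, ← Matrix.mul_kronecker_mul, hg, hP,
    Matrix.one_kronecker_one]

lemma kron_mixed {l : ℕ} (g h : Matrix (Fin 4) (Fin 4) ℝ)
    (P Q : Matrix (Fin l) (Fin l) ℝ) (hgh : g * h + h * g = 0) (hPQ : P * Q = Q * P) :
    (g ⊗ₖ P) * (h ⊗ₖ Q) + (h ⊗ₖ Q) * (g ⊗ₖ P) = 0 := by
  rw [← Matrix.mul_kronecker_mul, ← Matrix.mul_kronecker_mul, ← hPQ,
    ← Matrix.add_kronecker, hgh, Matrix.zero_kronecker]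

lemma kron_same {l : ℕ} (g : Matrix (Fin 4) (Fin 4) ℝ)
    (P Q : Matrix (Fin l) (Fin l) ℝ) (c : ℝ) (hg : g * g = -1)
    (hPQ : P * Q + Q * P = c • 1) :
    (g ⊗ₖ P) * (g ⊗ₖ Q) + (g ⊗ₖ Q) * (g ⊗ₖ P) = (-c) • 1 := by
  rw [← Matrix.mul_kronecker_mul, ← Matrix.mul_kronecker_mul, ← Matrix.kronecker_add, hPQ, hg,
    Matrix.kronecker_smul, neg_one_kron_one, smul_neg, neg_smul]

lemma one_anticomm {l : ℕ} :
    (1 : Matrix (Fin l) (Fin l) ℝ) * 1 + 1 * 1 = (2 : ℝ) • 1 := by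
  rw [one_mul]; norm_num [two_smul]

/-- from a family for `(m, 0)` on `O(l)` one obtains a family for
`(m+2, m+2)` on `O(4l)`. -/
theorem step_up_all_negative (m l : ℕ) (hm : 0 < m) (hl : 0 < l)
    (A : ℕ → Matrix (Fin l) (Fin l) ℝ)
    (hAo : ∀ i ∈ Finset.Icc 1 m, (A i)ᵀ * A i = 1)
    (hAc : ∀ i ∈ Finset.Icc 1 m, ∀ j ∈ Finset.Icc 1 m,
      A i * A j + A j * A i = (2 * cliffEta 0 i j) • (1 : Matrix (Fin l) (Fin l) ℝ)) :
    ∃ B : ℕ → Matrix (Fin (4 * l)) (Fin (4 * l)) ℝ,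
      (∀ i ∈ Finset.Icc 1 (m + 2), (B i)ᵀ * B i = 1) ∧
      (∀ i ∈ Finset.Icc 1 (m + 2), ∀ j ∈ Finset.Icc 1 (m + 2),
        B i * B j + B j * B i
          = (2 * cliffEta (m + 2) i j) • (1 : Matrix (Fin (4 * l)) (Fin (4 * l)) ℝ)) := by
  set e : Matrix (Fin 4 × Fin l) (Fin 4 × Fin l) ℝ ≃ₐ[ℝ] Matrix (Fin (4 * l)) (Fin (4 * l)) ℝ :=
    Matrix.reindexAlgEquiv ℝ ℝ finProdFinEquiv with he
  set f : ℕ → Matrix (Fin 4 × Fin l) (Fin 4 × Fin l) ℝ :=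
    fun i => if i ≤ m then quatLk ⊗ₖ A i else if i = m + 1 then quatLi ⊗ₖ 1 else quatLj ⊗ₖ 1
    with hf
  refine ⟨fun i => e (f i), ?_, ?_⟩
  · -- orthogonality
    intro i hi
    simp only [Finset.mem_Icc] at hi
    have hT : ∀ X : Matrix (Fin 4 × Fin l) (Fin 4 × Fin l) ℝ, (e X)ᵀ = e Xᵀ := by
      intro X
      simp [he, Matrix.reindexAlgEquiv_apply, Matrix.transpose_reindex]
    show (e (f i))ᵀ * e (f i) = 1
    rw [hT, ← _root_.map_mul]
    have : (f i)ᵀ * f i = 1 := by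
      by_cases h1 : i ≤ m
      · simp only [hf, if_pos h1]
        exact kron_orth _ _ quatLk_orth (hAo i (Finset.mem_Icc.mpr ⟨hi.1, h1⟩))
      · by_cases h2 : i = m + 1
        · simp only [hf, if_neg h1, if_pos h2]
          exact kron_orth _ _ quatLi_orth (by simp)
        · simp only [hf, if_neg h1, if_neg h2]
          exact kron_orth _ _ quatLj_orth (by simp)
    rw [this, _root_.map_one]
  · -- Clifford relations
    intro i hi j hj
    simp only [Finset.mem_Icc] at hi hj
    show e (f i) * e (f j) + e (f j) * e (f i) = _
    rw [← _root_.map_mul, ← _root_.map_mul, ← _root_.map_add]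
    have key : f i * f j + f j * f i
        = (2 * cliffEta (m + 2) i j) • (1 : Matrix (Fin 4 × Fin l) (Fin 4 × Fin l) ℝ) := by
      have hi1 := hi.1
      have hj1 := hj.1
      by_cases h1 : i ≤ m <;> by_cases h2 : j ≤ m
      · -- both ≤ m
        have hA := hAc i (Finset.mem_Icc.mpr ⟨hi.1, h1⟩) j (Finset.mem_Icc.mpr ⟨hj.1, h2⟩)
        simp only [hf, if_pos h1, if_pos h2]
        rw [kron_same _ _ _ _ quatLk_sq hA]
        by_cases hij : i = j
        · rw [show cliffEta (m + 2) i j = -1 by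
              unfold cliffEta; simp [hij]; omega,
            show cliffEta 0 i j = 1 by unfold cliffEta; simp [hij]; omega]
          norm_num
        · rw [show cliffEta (m + 2) i j = 0 by unfold cliffEta; simp [hij],
            show cliffEta 0 i j = 0 by unfold cliffEta; simp [hij]]
          norm_num
      · -- i ≤ m < j
        have hij : i ≠ j := by omega
        rw [show cliffEta (m + 2) i j = 0 by unfold cliffEta; simp [hij], mul_zero, zero_smul]
        by_cases h3 : j = m + 1
        · simp only [hf, if_pos h1, if_neg h2, if_pos h3]
          exact kron_mixed _ _ _ _ quatLk_Li (by simp)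
        · simp only [hf, if_pos h1, if_neg h2, if_neg h3]
          exact kron_mixed _ _ _ _ quatLk_Lj (by simp)
      · -- j ≤ m < i
        have hij : i ≠ j := by omega
        rw [show cliffEta (m + 2) i j = 0 by unfold cliffEta; simp [hij], mul_zero, zero_smul]
        by_cases h3 : i = m + 1
        · simp only [hf, if_neg h1, if_pos h2, if_pos h3]
          exact kron_mixed _ _ _ _ quatLi_Lk (by simp)
        · simp only [hf, if_neg h1, if_pos h2, if_neg h3]
          exact kron_mixed _ _ _ _ quatLj_Lk (by simp)
      · -- both > m
        by_cases h3 : i = m + 1 <;> by_cases h4 : j = m + 1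
        · -- i = j = m + 1
          simp only [hf, if_neg h1, if_neg h2, if_pos h3, if_pos h4]
          rw [kron_same _ _ _ _ quatLi_sq one_anticomm,
            show cliffEta (m + 2) i j = -1 by
              unfold cliffEta; simp [h3, h4]]
          norm_num
        · have hij : i ≠ j := by omega
          rw [show cliffEta (m + 2) i j = 0 by unfold cliffEta; simp [hij], mul_zero, zero_smul]
          simp only [hf, if_neg h1, if_neg h2, if_pos h3, if_neg h4]
          exact kron_mixed _ _ _ _ quatLi_Lj (by simp)
        · have hij : i ≠ j := by omega
          rw [show cliffEta (m + 2) i j = 0 by unfold cliffEta; simp [hij], mul_zero, zero_smul]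
          simp only [hf, if_neg h1, if_neg h2, if_neg h3, if_pos h4]
          exact kron_mixed _ _ _ _ quatLj_Li (by simp)
        · -- i = j = m + 2
          simp only [hf, if_neg h1, if_neg h2, if_neg h3, if_neg h4]
          rw [kron_same _ _ _ _ quatLj_sq one_anticomm,
            show cliffEta (m + 2) i j = -1 by
              unfold cliffEta
              simp [show i = j by omega]
              omega]
          norm_num
    rw [key, _root_.map_smul, _root_.map_one]
end
end

section
/- Let m ≥ 2 be an integer, r ∈ {0, 1, …, m}, and suppose A_1, …, A_m ∈ O(l) satisfy A_iA_j + A_jA_i = 2η_{ij}E_l for all i, j, where (η_{ij}) := J_{r,m−r}. Let d be a positive integer, let K_{2d} denote the 2d×2d exchange matrix (with entries (K_{2d})_{ab} = δ_{a+b,2d+1}), and define P_i := K_{2d} ⊗ A_i for i ∈ {1, …, r} and P_i := E_{2d} ⊗ A_i for i ∈ {r+1, …, m} (Kronecker products). Then P_1, …, P_m is a Clifford system of signature (m, r) on ℝ^{2dl}_{dl}: each P_i is symmetric with respect to the pseudo-inner product of ℝ^{2dl}_{dl}, and P_iP_j + P_jP_i = 2η_{ij}E_{2dl} for all i, j. 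-/
open Matrix

noncomputable section

open Kronecker

/-- The `n × n` exchange matrix, with `(K_n)_{ab} = δ_{a+b, n+1}` in 1-based indexing. -/
def exchMat (n : ℕ) : Matrix (Fin n) (Fin n) ℝ :=
  Matrix.of fun a b => if (a : ℕ) + (b : ℕ) + 1 = n then 1 else 0

/- ## Auxiliary lemmas -/

private lemma exchMat_transpose (n : ℕ) : (exchMat n)ᵀ = exchMat n := by
  ext a b
  simp only [exchMat, Matrix.transpose_apply, Matrix.of_apply]
  rw [Nat.add_comm (b : ℕ)]

private lemma exchMat_mul_self (n : ℕ) : exchMat n * exchMat n = 1 := by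
  ext a b
  have ha := a.isLt
  have hb := b.isLt
  rw [Matrix.mul_apply, Matrix.one_apply,
    Finset.sum_eq_single (⟨n - 1 - (a : ℕ), by omega⟩ : Fin n)]
  · simp only [exchMat, Matrix.of_apply]
    rcases eq_or_ne a b with h | h
    · subst h
      rw [if_pos (by omega), if_pos (by omega), if_pos rfl]
      norm_num
    · have h' : (a : ℕ) ≠ (b : ℕ) := fun hh => h (Fin.ext hh)
      rw [if_pos (by omega), if_neg (by omega), if_neg h]
      norm_num
  · intro c _ hc
    have hc' : (c : ℕ) ≠ n - 1 - (a : ℕ) := fun hh => hc (Fin.ext (by simpa using hh))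
    simp only [exchMat, Matrix.of_apply]
    rw [if_neg (by omega)]
    simp
  · intro h
    exact absurd (Finset.mem_univ _) h

/-- The signature diagonal on `Fin (2*d)`. -/
private def sgnDiag (d : ℕ) : Matrix (Fin (2 * d)) (Fin (2 * d)) ℝ :=
  Matrix.diagonal fun a => if (a : ℕ) < d then (-1 : ℝ) else 1

private lemma sgnDiag_mul_self (d : ℕ) : sgnDiag d * sgnDiag d = 1 := by
  ext a b
  simp only [sgnDiag, Matrix.diagonal_mul_diagonal, Matrix.diagonal_apply, Matrix.one_apply]
  split_ifs <;> norm_num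

private lemma sgnDiag_mul_exch (d : ℕ) :
    sgnDiag d * exchMat (2 * d) * sgnDiag d = -exchMat (2 * d) := by
  ext a b
  have ha := a.isLt
  have hb := b.isLt
  simp only [sgnDiag, Matrix.mul_diagonal, Matrix.diagonal_mul, exchMat,
    Matrix.neg_apply, Matrix.of_apply]
  split_ifs with h h1 h2 h2 <;> simp_all <;> omega

private lemma index_lt_iff {d l : ℕ} {a b : ℕ} (hb : b < l) :
    b + l * a < d * l ↔ a < d := by
  rw [Nat.mul_comm d l]
  constructor
  · intro h
    by_contra hge
    push_neg at hge
    have := Nat.mul_le_mul_left l hge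
    omega
  · intro h
    have h1 : l * a + l ≤ l * d := by
      have := Nat.mul_le_mul_left l h
      rwa [Nat.mul_succ] at this
    omega

private lemma psJ_eq (d l : ℕ) :
    psJ (2 * d * l) (d * l)
      = Matrix.reindex finProdFinEquiv finProdFinEquiv
          (sgnDiag d ⊗ₖ (1 : Matrix (Fin l) (Fin l) ℝ)) := by
  have : Matrix.reindex finProdFinEquiv.symm finProdFinEquiv.symm
      (psJ (2 * d * l) (d * l)) = sgnDiag d ⊗ₖ (1 : Matrix (Fin l) (Fin l) ℝ) := by
    ext ⟨a, b⟩ ⟨c, e⟩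
    simp only [Matrix.reindex_apply, Matrix.submatrix_apply, Equiv.symm_symm,
      psJ, sgnDiag, Matrix.kroneckerMap_apply, Matrix.diagonal_apply,
      Matrix.one_apply]
    rcases eq_or_ne (a, b) (c, e) with h | h
    · obtain ⟨rfl, rfl⟩ := Prod.ext_iff.mp h
      rw [if_pos rfl, if_pos rfl, if_pos rfl, mul_one]
      have hb := b.isLt
      have : ((finProdFinEquiv (a, b) : Fin (2 * d * l)) : ℕ) = b + l * a := by
        simp [finProdFinEquiv]
      rw [this]
      by_cases hlt : (a : ℕ) < d
      · rw [if_pos ((index_lt_iff hb).mpr hlt), if_pos hlt]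
      · rw [if_neg (fun hh => hlt ((index_lt_iff hb).mp hh)), if_neg hlt]
    · rw [if_neg (fun hh => h (finProdFinEquiv.injective hh))]
      have : a ≠ c ∨ b ≠ e := by
        by_contra hcon
        push_neg at hcon
        exact h (Prod.ext hcon.1 hcon.2)
      rcases this with hne | hne
      · rw [if_neg hne, zero_mul]
      · rw [if_neg hne, mul_zero]
  calc psJ (2 * d * l) (d * l)
      = Matrix.reindex finProdFinEquiv finProdFinEquiv
          (Matrix.reindex finProdFinEquiv.symm finProdFinEquiv.symm
            (psJ (2 * d * l) (d * l))) := by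
        simp
    _ = _ := by rw [this]

private lemma reindex_mul {n p : Type*} [Fintype n] [Fintype p]
    (e : n ≃ p) (M N : Matrix n n ℝ) :
    Matrix.reindex e e M * Matrix.reindex e e N = Matrix.reindex e e (M * N) := by
  simp only [Matrix.reindex_apply, Matrix.submatrix_mul_equiv]

private lemma reindex_smul_one {n p : Type*} [Fintype n] [Fintype p]
    [DecidableEq n] [DecidableEq p] (e : n ≃ p) (c : ℝ) :
    Matrix.reindex e e (c • (1 : Matrix n n ℝ)) = c • 1 := by
  ext a b
  simp [Matrix.one_apply]

private lemma reindex_add {n p : Type*} (e : n ≃ p) (M N : Matrix n n ℝ) :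
    Matrix.reindex e e M + Matrix.reindex e e N = Matrix.reindex e e (M + N) := by
  ext a b
  simp

/-- given an anticommuting orthogonal family `A_1, …, A_m ∈ O(l)` of
signature `(m, r)` and a positive integer `d`, the matrices
`P_i = K_{2d} ⊗ A_i` (for `1 ≤ i ≤ r`) and `P_i = E_{2d} ⊗ A_i` (for `r < i ≤ m`)
form a Clifford system of signature `(m, r)` on `ℝ^{2dl}_{dl}`
(identifying `Fin (2d) × Fin l` with `Fin (2dl)` row-major via `finProdFinEquiv`). -/
theorem kronecker_clifford_system (m r l d : ℕ) (hm : 2 ≤ m) (hr : r ≤ m)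
    (hl : 0 < l) (hd : 0 < d)
    (A : ℕ → Matrix (Fin l) (Fin l) ℝ)
    (hAo : ∀ i ∈ Finset.Icc 1 m, (A i)ᵀ * A i = 1)
    (hAc : ∀ i ∈ Finset.Icc 1 m, ∀ j ∈ Finset.Icc 1 m,
      A i * A j + A j * A i = (2 * cliffEta r i j) • (1 : Matrix (Fin l) (Fin l) ℝ))
    (P : ℕ → Matrix (Fin (2 * d * l)) (Fin (2 * d * l)) ℝ)
    (hP : ∀ i, P i = Matrix.reindex finProdFinEquiv finProdFinEquiv
      ((if i ≤ r then exchMat (2 * d) else (1 : Matrix (Fin (2 * d)) (Fin (2 * d)) ℝ)) ⊗ₖ A i)) :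
    (∀ i ∈ Finset.Icc 1 m,
      (P i)ᵀ = psJ (2 * d * l) (d * l) * P i * psJ (2 * d * l) (d * l)) ∧
    (∀ i ∈ Finset.Icc 1 m, ∀ j ∈ Finset.Icc 1 m,
      P i * P j + P j * P i
        = (2 * cliffEta r i j) • (1 : Matrix (Fin (2 * d * l)) (Fin (2 * d * l)) ℝ)) := by
  -- squares of the A's
  have hsq : ∀ i ∈ Finset.Icc 1 m, A i * A i = cliffEta r i i • 1 := by
    intro i hi
    have h := hAc i hi i hi
    have h2 : (2 : ℝ) • (A i * A i) = (2 : ℝ) • (cliffEta r i i • 1) := by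
      rw [two_smul]
      rw [mul_smul] at h
      exact h
    exact smul_right_injective (Matrix (Fin l) (Fin l) ℝ) two_ne_zero h2
  have heta2 : ∀ i, cliffEta r i i * cliffEta r i i = 1 := by
    intro i
    simp only [cliffEta, if_pos rfl]
    split_ifs <;> norm_num
  -- transpose formula
  have hAt : ∀ i ∈ Finset.Icc 1 m, (A i)ᵀ = cliffEta r i i • A i := by
    intro i hi
    have h1 : (A i)ᵀ * (A i * A i) = cliffEta r i i • (A i)ᵀ := by
      rw [hsq i hi, Matrix.mul_smul, mul_one]
    rw [← Matrix.mul_assoc, hAo i hi, Matrix.one_mul] at h1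
    calc (A i)ᵀ = (cliffEta r i i * cliffEta r i i) • (A i)ᵀ := by
          rw [heta2, one_smul]
      _ = cliffEta r i i • (cliffEta r i i • (A i)ᵀ) := by rw [mul_smul]
      _ = cliffEta r i i • A i := by rw [← h1]
  constructor
  · -- symmetry
    intro i hi
    rw [hP, psJ_eq, reindex_mul, reindex_mul, Matrix.transpose_reindex,
      ← Matrix.kroneckerMap_transpose]
    congr 1
    rw [← Matrix.mul_kronecker_mul, ← Matrix.mul_kronecker_mul,
      Matrix.one_mul, Matrix.mul_one, hAt i hi]
    by_cases hir : i ≤ r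
    · have heta : cliffEta r i i = -1 := by
        simp [cliffEta, hir]
      rw [if_pos hir, heta, exchMat_transpose, sgnDiag_mul_exch]
      rw [Matrix.kronecker_smul, neg_smul, one_smul]
      ext ⟨a, b⟩ ⟨c, e⟩
      simp [Matrix.kroneckerMap_apply]
    · have heta : cliffEta r i i = 1 := by
        simp [cliffEta, hir]
      rw [if_neg hir, heta, one_smul, Matrix.transpose_one,
        Matrix.mul_one, sgnDiag_mul_self]
  · -- Clifford relations
    intro i hi j hj
    rw [hP, hP, reindex_mul, reindex_mul, reindex_add]
    have key : ∀ (K : Matrix (Fin (2 * d)) (Fin (2 * d)) ℝ),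
        K ⊗ₖ (A i * A j) + K ⊗ₖ (A j * A i)
          = (2 * cliffEta r i j) • (K ⊗ₖ (1 : Matrix (Fin l) (Fin l) ℝ)) := by
      intro K
      rw [← Matrix.kronecker_add, hAc i hi j hj, Matrix.kronecker_smul]
    by_cases hir : i ≤ r <;> by_cases hjr : j ≤ r
    · rw [if_pos hir, if_pos hjr, ← Matrix.mul_kronecker_mul, ← Matrix.mul_kronecker_mul,
        exchMat_mul_self, key, Matrix.one_kronecker_one]
      exact reindex_smul_one _ _
    · have hij : i ≠ j := fun h => hjr (h ▸ hir)
      have heta : cliffEta r i j = 0 := by simp [cliffEta, hij]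
      rw [if_pos hir, if_neg hjr, ← Matrix.mul_kronecker_mul, ← Matrix.mul_kronecker_mul,
        Matrix.one_mul, Matrix.mul_one, key, heta]
      simp
    · have hij : i ≠ j := fun h => hir (h ▸ hjr)
      have heta : cliffEta r i j = 0 := by simp [cliffEta, hij]
      rw [if_neg hir, if_pos hjr, ← Matrix.mul_kronecker_mul, ← Matrix.mul_kronecker_mul,
        Matrix.one_mul, Matrix.mul_one, key, heta]
      simp
    · rw [if_neg hir, if_neg hjr, ← Matrix.mul_kronecker_mul, ← Matrix.mul_kronecker_mul,
        Matrix.one_mul, key, Matrix.one_kronecker_one]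
      exact reindex_smul_one _ _
end
end

section
/- For any pair (m, r) with m an integer larger than 1 and r ∈ {0, 1, 2, …, m}, there exist a positive integer l and a Clifford system P_1, …, P_m of signature (m, r) on ℝ^{2l}_l (i.e. with s = l, the neutral pseudo-inner product). -/
open Matrix

noncomputable section

namespace CliffordAux

open Kronecker

set_option linter.unusedSectionVars false
set_option linter.unusedVariables false

abbrev M2 := Matrix (Fin 2) (Fin 2) ℝ

def s1 : M2 := !![0,1;1,0]
def s3 : M2 := !![1,0;0,-1]
def ep : M2 := !![0,1;-1,0]
def dJ : Fin 2 → ℝ := ![-1,1]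

lemma s1_t : s1ᵀ = s1 := by ext i j; fin_cases i <;> fin_cases j <;> simp [s1]
lemma s3_t : s3ᵀ = s3 := by ext i j; fin_cases i <;> fin_cases j <;> simp [s3]
lemma ep_t : epᵀ = -ep := by ext i j; fin_cases i <;> fin_cases j <;> simp [ep]
lemma s1_sq : s1 * s1 = 1 := by
  ext i j; fin_cases i <;> fin_cases j <;>
    simp [s1, Matrix.mul_apply, Fin.sum_univ_two, Matrix.one_apply]
lemma s3_sq : s3 * s3 = 1 := by
  ext i j; fin_cases i <;> fin_cases j <;>
    simp [s3, Matrix.mul_apply, Fin.sum_univ_two, Matrix.one_apply]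
lemma ep_sq : ep * ep = -1 := by
  ext i j; fin_cases i <;> fin_cases j <;>
    simp [ep, Matrix.mul_apply, Fin.sum_univ_two, Matrix.one_apply]
lemma s3s1 : s3 * s1 + s1 * s3 = 0 := by
  ext i j; fin_cases i <;> fin_cases j <;>
    simp [s1, s3, Matrix.mul_apply, Fin.sum_univ_two]
lemma j2_s3 : Matrix.diagonal dJ * s3 * Matrix.diagonal dJ = s3 := by
  ext i j; fin_cases i <;> fin_cases j <;>
    simp [s3, dJ, Matrix.mul_apply, Fin.sum_univ_two, Matrix.diagonal]
lemma j2_s1 : Matrix.diagonal dJ * s1 * Matrix.diagonal dJ = -s1 := by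
  ext i j; fin_cases i <;> fin_cases j <;>
    simp [s1, dJ, Matrix.mul_apply, Fin.sum_univ_two, Matrix.diagonal]

lemma cliffEta_same (r i : ℕ) : cliffEta r i i = if i ≤ r then -1 else 1 := if_pos rfl
lemma cliffEta_ne (r : ℕ) {i j : ℕ} (h : i ≠ j) : cliffEta r i j = 0 := if_neg h

/-- A Clifford-type system with symmetry sign `sg` with respect to a balanced
diagonal `±1` metric `d` on a finite index type `ι` of cardinality `2l`. -/
structure Pack (sg : ℝ) (m r : ℕ) : Type 1 where
  l : ℕ
  lpos : 0 < l
  ι : Type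
  [fin : Fintype ι]
  [dec : DecidableEq ι]
  d : ι → ℝ
  P : ℕ → Matrix ι ι ℝ
  hd : ∀ i, d i = -1 ∨ d i = 1
  hcard : Fintype.card ι = 2 * l
  hneg : Fintype.card {i : ι // d i = -1} = l
  hsym : ∀ i ∈ Finset.Icc 1 m, (P i)ᵀ = sg • (Matrix.diagonal d * P i * Matrix.diagonal d)
  hrel : ∀ i ∈ Finset.Icc 1 m, ∀ j ∈ Finset.Icc 1 m,
      P i * P j + P j * P i = (2 * cliffEta r i j) • (1 : Matrix ι ι ℝ)

section KronLemmas

variable {ι : Type} [Fintype ι] [DecidableEq ι]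

lemma conj_kron (D A : Matrix ι ι ℝ) (F X : M2) :
    (D ⊗ₖ F) * (A ⊗ₖ X) * (D ⊗ₖ F) = (D * A * D) ⊗ₖ (F * X * F) := by
  rw [← Matrix.mul_kronecker_mul, ← Matrix.mul_kronecker_mul]

lemma kron_transpose (A : Matrix ι ι ℝ) (X : M2) : (A ⊗ₖ X)ᵀ = Aᵀ ⊗ₖ Xᵀ :=
  (Matrix.kroneckerMap_transpose _ _ _).symm

lemma kron_neg (A : Matrix ι ι ℝ) (X : M2) : A ⊗ₖ (-X) = -(A ⊗ₖ X) := by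
  ext p q; simp [Matrix.kronecker_apply]

lemma sum_kron_same (A B : Matrix ι ι ℝ) (X : M2) (c : ℝ)
    (h : A * B + B * A = c • 1) (hX : X * X = 1) :
    (A ⊗ₖ X) * (B ⊗ₖ X) + (B ⊗ₖ X) * (A ⊗ₖ X) = c • 1 := by
  rw [← Matrix.mul_kronecker_mul, ← Matrix.mul_kronecker_mul, hX,
    ← Matrix.add_kronecker, h, Matrix.smul_kronecker, Matrix.one_kronecker_one]

lemma sum_kron_neg (A B : Matrix ι ι ℝ) (X : M2) (c : ℝ)
    (h : A * B + B * A = c • 1) (hX : X * X = -1) :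
    (A ⊗ₖ X) * (B ⊗ₖ X) + (B ⊗ₖ X) * (A ⊗ₖ X) = (-c) • 1 := by
  rw [← Matrix.mul_kronecker_mul, ← Matrix.mul_kronecker_mul, hX,
    ← Matrix.add_kronecker, h]
  have h1 : (-1 : M2) = (-1 : ℝ) • 1 := by simp
  rw [h1, Matrix.smul_kronecker, Matrix.kronecker_smul, Matrix.one_kronecker_one, smul_smul]
  ring_nf

lemma cross_kron (A : Matrix ι ι ℝ) (X Y : M2) (h2 : X * Y + Y * X = 0) :
    (A ⊗ₖ X) * ((1 : Matrix ι ι ℝ) ⊗ₖ Y) + ((1 : Matrix ι ι ℝ) ⊗ₖ Y) * (A ⊗ₖ X) = 0 := by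
  rw [← Matrix.mul_kronecker_mul, ← Matrix.mul_kronecker_mul, mul_one, one_mul,
    ← Matrix.kronecker_add, h2, Matrix.kronecker_zero]

lemma cardE (d : ι → ℝ) (l : ℕ) (h : Fintype.card {i : ι // d i = -1} = l) :
    Fintype.card {p : ι × Fin 2 // d p.1 = -1} = 2 * l := by
  have e : {p : ι × Fin 2 // d p.1 = -1} ≃ {i : ι // d i = -1} × Fin 2 :=
    ⟨fun x => (⟨x.1.1, x.2⟩, x.1.2), fun y => ⟨(y.1.1, y.2), y.1.2⟩,
      fun x => rfl, fun y => rfl⟩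
  rw [Fintype.card_congr e, Fintype.card_prod, h, Fintype.card_fin]
  ring

lemma cardJ (d : ι → ℝ) (hd : ∀ i, d i = -1 ∨ d i = 1) :
    Fintype.card {p : ι × Fin 2 // d p.1 * dJ p.2 = -1} = Fintype.card ι := by
  have e : {p : ι × Fin 2 // d p.1 * dJ p.2 = -1} ≃ ι := by
    refine ⟨fun x => x.1.1, fun i => ⟨(i, if d i = 1 then 0 else 1), ?_⟩, ?_, fun i => rfl⟩
    · rcases hd i with h | h <;> simp [h, dJ] <;> norm_num
    · rintro ⟨⟨i, j⟩, h⟩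
      apply Subtype.ext
      dsimp only
      congr 1
      rcases hd i with hi | hi
      · rw [if_neg (by rw [hi]; norm_num)]
        rw [hi] at h
        fin_cases j
        · exfalso; revert h; simp [dJ]; norm_num
        · rfl
      · rw [if_pos hi]
        rw [hi] at h
        fin_cases j
        · rfl
        · exfalso; revert h; simp [dJ]; norm_num
  rw [Fintype.card_congr e]

lemma diag_sq (d : ι → ℝ) (hd : ∀ i, d i = -1 ∨ d i = 1) :
    Matrix.diagonal d * Matrix.diagonal d = 1 := by
  rw [Matrix.diagonal_mul_diagonal]
  have h : (fun i => d i * d i) = fun _ => (1 : ℝ) := by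
    funext i; rcases hd i with h | h <;> rw [h] <;> norm_num
  rw [h]
  exact Matrix.diagonal_one

end KronLemmas

/-- Base case: a single antisymmetric generator with square `+1`. -/
def baseA : Pack (-1) 1 0 where
  l := 1
  lpos := one_pos
  ι := Fin 2
  d := ![-1, 1]
  P := fun _ => s1
  hd := by intro i; fin_cases i <;> simp
  hcard := by simp
  hneg := by
    apply Fintype.card_eq_one_iff.2
    refine ⟨⟨0, by norm_num⟩, ?_⟩
    rintro ⟨i, hi⟩
    fin_cases i
    · rfl
    · exfalso; revert hi; norm_num
  hsym := by
    intro i _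
    ext a b
    fin_cases a <;> fin_cases b <;>
      simp [s1, Matrix.mul_apply, Fin.sum_univ_two, Matrix.diagonal]
  hrel := by
    intro i hi j hj
    simp only [Finset.mem_Icc] at hi hj
    obtain rfl : i = 1 := le_antisymm hi.2 hi.1
    obtain rfl : j = 1 := le_antisymm hj.2 hj.1
    rw [cliffEta_same, if_neg (by norm_num)]
    ext a b
    fin_cases a <;> fin_cases b <;>
      simp [s1, Matrix.mul_apply, Fin.sum_univ_two, Matrix.one_apply] <;> norm_num

/-- Base case: a single symmetric generator with square `+1`. -/
def baseS : Pack 1 1 0 where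
  l := 1
  lpos := one_pos
  ι := Fin 2
  d := ![-1, 1]
  P := fun _ => s3
  hd := by intro i; fin_cases i <;> simp
  hcard := by simp
  hneg := by
    apply Fintype.card_eq_one_iff.2
    refine ⟨⟨0, by norm_num⟩, ?_⟩
    rintro ⟨i, hi⟩
    fin_cases i
    · rfl
    · exfalso; revert hi; norm_num
  hsym := by
    intro i _
    ext a b
    fin_cases a <;> fin_cases b <;>
      simp [s3, Matrix.mul_apply, Fin.sum_univ_two, Matrix.diagonal]
  hrel := by
    intro i hi j hj
    simp only [Finset.mem_Icc] at hi hj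
    obtain rfl : i = 1 := le_antisymm hi.2 hi.1
    obtain rfl : j = 1 := le_antisymm hj.2 hj.1
    rw [cliffEta_same, if_neg (by norm_num)]
    ext a b
    fin_cases a <;> fin_cases b <;>
      simp [s3, Matrix.mul_apply, Fin.sum_univ_two, Matrix.one_apply] <;> norm_num

/-- Add a (positive) symmetric generator to a symmetric system. -/
def stepS {m r : ℕ} (hrm : r ≤ m) (S : Pack 1 m r) : Pack 1 (m + 1) r :=
  letI := S.fin
  letI := S.dec
  { l := 2 * S.l
    lpos := by have := S.lpos; omega
    ι := S.ι × Fin 2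
    d := fun p => S.d p.1
    P := fun i => if i ≤ m then S.P i ⊗ₖ s3 else (1 : Matrix S.ι S.ι ℝ) ⊗ₖ s1
    hd := fun p => S.hd p.1
    hcard := by rw [Fintype.card_prod, S.hcard, Fintype.card_fin]; ring
    hneg := cardE S.d S.l S.hneg
    hsym := by
      have hD' : Matrix.diagonal (fun p : S.ι × Fin 2 => S.d p.1)
          = Matrix.diagonal S.d ⊗ₖ (1 : M2) := by
        rw [← Matrix.diagonal_one, Matrix.diagonal_kronecker_diagonal]
        simp
      intro i hi
      rw [Finset.mem_Icc] at hi
      by_cases h : i ≤ m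
      · have h2 : (1 : M2) * s3 * 1 = s3 := by rw [Matrix.one_mul, Matrix.mul_one]
        rw [if_pos h, one_smul, hD', kron_transpose, s3_t,
          S.hsym i (Finset.mem_Icc.2 ⟨hi.1, h⟩), one_smul, conj_kron, h2]
      · have h1 : Matrix.diagonal S.d * 1 * Matrix.diagonal S.d = 1 := by
          rw [Matrix.mul_one]; exact diag_sq S.d S.hd
        have h2 : (1 : M2) * s1 * 1 = s1 := by rw [Matrix.one_mul, Matrix.mul_one]
        rw [if_neg h, one_smul, hD', kron_transpose, s1_t, Matrix.transpose_one,
          conj_kron, h1, h2]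
    hrel := by
      intro i hi j hj
      rw [Finset.mem_Icc] at hi hj
      by_cases h1 : i ≤ m <;> by_cases h2 : j ≤ m
      · rw [if_pos h1, if_pos h2]
        exact sum_kron_same _ _ _ _
          (S.hrel i (Finset.mem_Icc.2 ⟨hi.1, h1⟩) j (Finset.mem_Icc.2 ⟨hj.1, h2⟩)) s3_sq
      · rw [if_pos h1, if_neg h2, cliffEta_ne r (by omega), mul_zero, zero_smul]
        exact cross_kron _ _ _ s3s1
      · rw [if_neg h1, if_pos h2, cliffEta_ne r (by omega), mul_zero, zero_smul]
        rw [add_comm]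
        exact cross_kron _ _ _ s3s1
      · obtain rfl : i = m + 1 := by omega
        obtain rfl : j = m + 1 := by omega
        rw [if_neg h1, cliffEta_same, if_neg (by omega), mul_one]
        refine sum_kron_same _ _ _ _ ?_ s1_sq
        rw [one_mul, two_smul]
    }

/-- Add a (positive) antisymmetric generator to an antisymmetric system. -/
def stepA {m : ℕ} (S : Pack (-1) m 0) : Pack (-1) (m + 1) 0 :=
  letI := S.fin
  letI := S.dec
  { l := 2 * S.l
    lpos := by have := S.lpos; omega
    ι := S.ι × Fin 2
    d := fun p => S.d p.1 * dJ p.2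
    P := fun i => if i ≤ m then S.P i ⊗ₖ s3 else (1 : Matrix S.ι S.ι ℝ) ⊗ₖ s1
    hd := by
      rintro ⟨i, j⟩
      rcases S.hd i with h | h <;> fin_cases j <;> simp [h, dJ] <;> norm_num
    hcard := by rw [Fintype.card_prod, S.hcard, Fintype.card_fin]; ring
    hneg := by rw [cardJ S.d S.hd, S.hcard]
    hsym := by
      have hD' : Matrix.diagonal (fun p : S.ι × Fin 2 => S.d p.1 * dJ p.2)
          = Matrix.diagonal S.d ⊗ₖ Matrix.diagonal dJ :=
        (Matrix.diagonal_kronecker_diagonal _ _).symm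
      intro i hi
      rw [Finset.mem_Icc] at hi
      by_cases h : i ≤ m
      · rw [if_pos h, hD', kron_transpose, s3_t,
          S.hsym i (Finset.mem_Icc.2 ⟨hi.1, h⟩), conj_kron, j2_s3,
          Matrix.smul_kronecker]
      · have h1 : Matrix.diagonal S.d * 1 * Matrix.diagonal S.d = 1 := by
          rw [Matrix.mul_one]; exact diag_sq S.d S.hd
        rw [if_neg h, hD', kron_transpose, s1_t, Matrix.transpose_one, conj_kron,
          h1, j2_s1, kron_neg]
        simp
    hrel := by
      intro i hi j hj
      rw [Finset.mem_Icc] at hi hj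
      by_cases h1 : i ≤ m <;> by_cases h2 : j ≤ m
      · rw [if_pos h1, if_pos h2]
        exact sum_kron_same _ _ _ _
          (S.hrel i (Finset.mem_Icc.2 ⟨hi.1, h1⟩) j (Finset.mem_Icc.2 ⟨hj.1, h2⟩)) s3_sq
      · rw [if_pos h1, if_neg h2, cliffEta_ne 0 (by omega), mul_zero, zero_smul]
        exact cross_kron _ _ _ s3s1
      · rw [if_neg h1, if_pos h2, cliffEta_ne 0 (by omega), mul_zero, zero_smul]
        rw [add_comm]
        exact cross_kron _ _ _ s3s1
      · obtain rfl : i = m + 1 := by omega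
        obtain rfl : j = m + 1 := by omega
        rw [if_neg h1, cliffEta_same, if_neg (by omega), mul_one]
        refine sum_kron_same _ _ _ _ ?_ s1_sq
        rw [one_mul, two_smul]
    }

/-- Convert an antisymmetric all-positive system into a symmetric all-negative one. -/
def stepC {m : ℕ} (S : Pack (-1) m 0) : Pack 1 m m :=
  letI := S.fin
  letI := S.dec
  { l := 2 * S.l
    lpos := by have := S.lpos; omega
    ι := S.ι × Fin 2
    d := fun p => S.d p.1
    P := fun i => S.P i ⊗ₖ ep
    hd := fun p => S.hd p.1
    hcard := by rw [Fintype.card_prod, S.hcard, Fintype.card_fin]; ring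
    hneg := cardE S.d S.l S.hneg
    hsym := by
      have hD' : Matrix.diagonal (fun p : S.ι × Fin 2 => S.d p.1)
          = Matrix.diagonal S.d ⊗ₖ (1 : M2) := by
        rw [← Matrix.diagonal_one, Matrix.diagonal_kronecker_diagonal]
        simp
      intro i hi
      have h2 : (1 : M2) * ep * 1 = ep := by rw [Matrix.one_mul, Matrix.mul_one]
      rw [hD', kron_transpose, ep_t, S.hsym i hi, kron_neg, Matrix.smul_kronecker,
        one_smul, conj_kron, h2]
      simp
    hrel := by
      intro i hi j hj
      have key := sum_kron_neg (S.P i) (S.P j) ep (2 * cliffEta 0 i j)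
        (S.hrel i hi j hj) ep_sq
      rw [key]
      congr 1
      rw [Finset.mem_Icc] at hi
      by_cases h : i = j
      · subst h
        rw [cliffEta_same, cliffEta_same, if_pos hi.2, if_neg (by omega)]
        ring
      · rw [cliffEta_ne 0 h, cliffEta_ne m h]
        ring
    }

/-- Antisymmetric all-positive systems of any size. -/
def packA : (m : ℕ) → Pack (-1) (m + 1) 0
  | 0 => baseA
  | (n + 1) => stepA (packA n)

/-- Symmetric systems with all generators positive. -/
def packS0 : (m : ℕ) → Pack 1 (m + 1) 0
  | 0 => baseS
  | (n + 1) => stepS (Nat.zero_le _) (packS0 n)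

/-- Iterate `stepS`. -/
def iterS {m r : ℕ} (hrm : r ≤ m) (S : Pack 1 m r) : (k : ℕ) → Pack 1 (m + k) r
  | 0 => S
  | (n + 1) => stepS (le_trans hrm (Nat.le_add_right m n)) (iterS hrm S n)

/-- Symmetric systems of arbitrary signature. -/
def packS : (m r : ℕ) → 1 ≤ m → r ≤ m → Pack 1 m r := fun m r hm hr =>
  match r with
  | 0 => by
      have h := iterS (Nat.zero_le 1) (packS0 0) (m - 1)
      rwa [show 1 + (m - 1) = m by omega] at h
  | (s + 1) => by
      have base : Pack 1 (s + 1) (s + 1) := stepC (packA s)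
      have h := iterS (le_refl (s + 1)) base (m - (s + 1))
      rwa [show s + 1 + (m - (s + 1)) = m by omega] at h

end CliffordAux

/-- for any `m ≥ 2` and `r ∈ {0, …, m}` there exist a positive integer `l`
and a Clifford system of signature `(m, r)` on `ℝ^{2l}_l` (the neutral pseudo-metric). -/
theorem exists_clifford_system (m r : ℕ) (hm : 2 ≤ m) (hr : r ≤ m) :
    ∃ l : ℕ, 0 < l ∧ ∃ P : ℕ → Matrix (Fin (2 * l)) (Fin (2 * l)) ℝ,
      IsCliffordSystem l l m r P := by
  classical
  have S := CliffordAux.packS m r (by omega) hr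
  letI := S.fin
  letI := S.dec
  refine ⟨S.l, S.lpos, ?_⟩
  have hc2 : Fintype.card {i : S.ι // ¬ S.d i = -1} = S.l := by
    rw [Fintype.card_subtype_compl, S.hneg, S.hcard]; omega
  have hll : S.l + S.l = 2 * S.l := by omega
  let e1 := Fintype.equivFinOfCardEq S.hneg
  let e2 := Fintype.equivFinOfCardEq hc2
  let e : S.ι ≃ Fin (2 * S.l) :=
    (Equiv.sumCompl (fun i => S.d i = -1)).symm.trans
      ((e1.sumCongr e2).trans (finSumFinEquiv.trans (finCongr hll)))
  have hdi : ∀ i : S.ι, S.d i = if ((e i : ℕ) < S.l) then (-1 : ℝ) else 1 := by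
    intro i
    by_cases h : S.d i = -1
    · have he : e i = finCongr hll (finSumFinEquiv (Sum.inl (e1 ⟨i, h⟩))) := by
        simp only [e, Equiv.trans_apply, Equiv.sumCongr_apply]
        rw [Equiv.sumCompl_symm_apply_of_pos (p := fun i => S.d i = -1) (a := i) h, Sum.map_inl]
      have hv : (e i : ℕ) < S.l := by
        rw [he]
        simp only [finCongr_apply, Fin.coe_cast, finSumFinEquiv_apply_left, Fin.coe_castAdd]
        exact (e1 ⟨i, h⟩).isLt
      rw [if_pos hv, h]
    · have he : e i = finCongr hll (finSumFinEquiv (Sum.inr (e2 ⟨i, h⟩))) := by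
        simp only [e, Equiv.trans_apply, Equiv.sumCongr_apply]
        rw [Equiv.sumCompl_symm_apply_of_neg (p := fun i => S.d i = -1) (a := i) h, Sum.map_inr]
      have hv : ¬ ((e i : ℕ) < S.l) := by
        rw [he]
        simp only [finCongr_apply, Fin.coe_cast, finSumFinEquiv_apply_right, Fin.coe_natAdd]
        omega
      rw [if_neg hv]
      rcases S.hd i with h' | h'
      · exact absurd h' h
      · exact h'
  have hfun : S.d ∘ ⇑e.symm = fun k : Fin (2 * S.l) => if (k : ℕ) < S.l then (-1 : ℝ) else 1 := by
    funext k
    rw [Function.comp_apply, hdi (e.symm k), Equiv.apply_symm_apply]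
  have hD : psJ (2 * S.l) S.l = (Matrix.diagonal S.d).submatrix ⇑e.symm ⇑e.symm := by
    rw [Matrix.submatrix_diagonal_equiv, hfun]
    rfl
  refine ⟨fun k => (S.P k).submatrix ⇑e.symm ⇑e.symm, ?_, ?_⟩
  · intro i hi
    rw [Matrix.transpose_submatrix, S.hsym i hi, one_smul, hD,
      Matrix.submatrix_mul_equiv, Matrix.submatrix_mul_equiv]
  · intro i hi j hj
    rw [Matrix.submatrix_mul_equiv, Matrix.submatrix_mul_equiv]
    have hadd : (S.P i * S.P j).submatrix ⇑e.symm ⇑e.symm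
        + (S.P j * S.P i).submatrix ⇑e.symm ⇑e.symm
        = (S.P i * S.P j + S.P j * S.P i).submatrix ⇑e.symm ⇑e.symm := by
      ext a b
      simp [Matrix.submatrix_apply, Matrix.add_apply]
    rw [hadd, S.hrel i hi j hj]
    ext a b
    simp [Matrix.submatrix_apply, Matrix.smul_apply, Matrix.one_apply,
      EmbeddingLike.apply_eq_iff_eq]
end
end

section
/- Let P_1, …, P_m be a Clifford system of signature (m, r) on ℝ^{2l}_s with r ≡ 0 (mod 2). Let p ≡ 0 (mod 4) with p ≥ 4, let q be odd with q + p − 1 ≤ m, and set Q := P_qP_{q+1}⋯P_{q+p−1}. Then: (i) the eigenvalues of Q are exactly −1 and 1; (ii) ℝ^{2l} = E_+(Q) ⊕ E_−(Q), where E_±(Q) are the eigenspaces of Q for ±1, and this decomposition is orthogonal with respect to ⟨·,·⟩ (i.e. ⟨u,v⟩ = 0 for u ∈ E_+(Q), v ∈ E_−(Q)); (iii) dim E_+(Q) = dim E_−(Q) = l; (iv) the restriction of ⟨·,·⟩ to each of E_+(Q) and E_−(Q) is nondegenerate. -/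
open Matrix

noncomputable section

/-- for a Clifford system of signature `(m, r)` with `r` even, and
`p ≡ 0 (mod 4)`, `p ≥ 4`, `q` odd with `q + p - 1 ≤ m`, set
`Q = P_q P_{q+1} ⋯ P_{q+p-1}`. Then (i) the eigenvalues of `Q` are exactly `-1` and `1`;
(ii) every vector decomposes uniquely as a sum of a `+1`- and a `-1`-eigenvector, and the
decomposition is orthogonal for `⟨·,·⟩`; (iii) both eigenspaces have dimension `l`;
(iv) `⟨·,·⟩` restricts nondegenerately to each eigenspace. -/
theorem clifford_product_eigendecomposition (l s m r q p : ℕ) (hl : 0 < l)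
    (hs : s ≤ 2 * l) (hm : 2 ≤ m) (hr : r ≤ m) (hr2 : r % 2 = 0)
    (P : ℕ → Matrix (Fin (2 * l)) (Fin (2 * l)) ℝ)
    (hP : IsCliffordSystem l s m r P)
    (hq : q % 2 = 1) (hp4 : p % 4 = 0) (hp : 4 ≤ p) (hqp : q + p - 1 ≤ m)
    (Q : Matrix (Fin (2 * l)) (Fin (2 * l)) ℝ)
    (hQ : Q = ((List.range p).map fun k => P (q + k)).prod) :
    -- (i) the eigenvalues of Q are exactly -1 and 1
    ((∃ z : Fin (2 * l) → ℝ, z ≠ 0 ∧ Q *ᵥ z = z) ∧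
     (∃ z : Fin (2 * l) → ℝ, z ≠ 0 ∧ Q *ᵥ z = -z) ∧
     (∀ (μ : ℝ) (z : Fin (2 * l) → ℝ), z ≠ 0 → Q *ᵥ z = μ • z → μ = 1 ∨ μ = -1)) ∧
    -- (ii) unique eigendecomposition, orthogonal for the pseudo-inner product
    (∀ z : Fin (2 * l) → ℝ, ∃! w : (Fin (2 * l) → ℝ) × (Fin (2 * l) → ℝ),
      Q *ᵥ w.1 = w.1 ∧ Q *ᵥ w.2 = -w.2 ∧ z = w.1 + w.2) ∧
    (∀ u v : Fin (2 * l) → ℝ, Q *ᵥ u = u → Q *ᵥ v = -v → psInner (2 * l) s u v = 0) ∧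
    -- (iii) both eigenspaces are l-dimensional
    (Module.finrank ℝ (Module.End.eigenspace (Matrix.toLin' Q) 1) = l ∧
     Module.finrank ℝ (Module.End.eigenspace (Matrix.toLin' Q) (-1)) = l) ∧
    -- (iv) the pseudo-inner product is nondegenerate on each eigenspace
    ((∀ u : Fin (2 * l) → ℝ, Q *ᵥ u = u →
        (∀ v : Fin (2 * l) → ℝ, Q *ᵥ v = v → psInner (2 * l) s u v = 0) → u = 0) ∧
     (∀ u : Fin (2 * l) → ℝ, Q *ᵥ u = -u →
        (∀ v : Fin (2 * l) → ℝ, Q *ᵥ v = -v → psInner (2 * l) s u v = 0) → u = 0)) := by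
  classical
  obtain ⟨hPsym, hPrel⟩ := hP
  set J := psJ (2 * l) s with hJdef
  have hJT : Jᵀ = J := Matrix.diagonal_transpose _
  have hJJ : J * J = 1 := by
    rw [hJdef]
    unfold psJ
    rw [Matrix.diagonal_mul_diagonal]
    have : (fun i : Fin (2*l) => (if (i:ℕ) < s then (-1:ℝ) else 1) * (if (i:ℕ) < s then (-1:ℝ) else 1)) = fun _ => (1:ℝ) := by
      funext i; by_cases h : (i:ℕ) < s <;> simp [h]
    rw [this, Matrix.diagonal_one]
  set f : ℕ → Matrix (Fin (2*l)) (Fin (2*l)) ℝ := fun k => P (q + k) with hfdef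
  have hmem : ∀ k, k < p → q + k ∈ Finset.Icc 1 m := by
    intro k hk; simp only [Finset.mem_Icc]; omega
  set ε : ℕ → ℝ := fun k => if q + k ≤ r then (-1:ℝ) else 1 with hεdef
  have hε1 : ∀ k, ε k = 1 ∨ ε k = -1 := by
    intro k; by_cases h : q + k ≤ r <;> simp [hεdef, h]
  have h_sq : ∀ k, k < p → f k * f k = ε k • 1 := by
    intro k hk
    have h := hPrel (q+k) (hmem k hk) (q+k) (hmem k hk)
    have hc : cliffEta r (q+k) (q+k) = ε k := by simp [cliffEta, hεdef]
    rw [hc] at h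
    have h2 : (2:ℝ) • (f k * f k) = (2:ℝ) • (ε k • 1) := by
      rw [two_smul, smul_smul]; exact h
    exact smul_right_injective _ (two_ne_zero) h2
  have h_anti : ∀ i j, i < p → j < p → i ≠ j → f i * f j = -(f j * f i) := by
    intro i j hi hj hij
    have h := hPrel (q+i) (hmem i hi) (q+j) (hmem j hj)
    have hc : cliffEta r (q+i) (q+j) = 0 := by
      simp only [cliffEta, if_neg (by omega : ¬ q+i = q+j)]
    rw [hc] at h
    simp only [mul_zero, zero_smul] at h
    exact eq_neg_of_add_eq_zero_left h
  have h_tr : ∀ k, k < p → (f k)ᵀ = J * f k * J := by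
    intro k hk; exact hPsym (q+k) (hmem k hk)
  set L : ℕ → Matrix (Fin (2*l)) (Fin (2*l)) ℝ := fun n => ((List.range n).map f).prod with hLdef
  have hL0 : L 0 = 1 := by simp [hLdef]
  have hLsucc : ∀ n, L (n+1) = L n * f n := by
    intro n
    simp only [hLdef]
    rw [List.range_succ, List.map_append, List.prod_append]
    simp
  have h_AC : ∀ n k, n ≤ k → k < p → f k * L n = ((-1:ℝ)^n) • (L n * f k) := by
    intro n
    induction n with
    | zero => intro k _ _; simp [hL0]
    | succ n ih =>
      intro k hnk hkp
      rw [hLsucc]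
      calc f k * (L n * f n) = (f k * L n) * f n := by rw [mul_assoc]
        _ = ((-1:ℝ)^n • (L n * f k)) * f n := by rw [ih k (by omega) hkp]
        _ = (-1:ℝ)^n • (L n * (f k * f n)) := by rw [smul_mul_assoc, mul_assoc]
        _ = (-1:ℝ)^n • (L n * (-(f n * f k))) := by
              rw [h_anti k n hkp (by omega) (by omega)]
        _ = (-1:ℝ)^(n+1) • (L n * f n * f k) := by
              rw [mul_neg, smul_neg, pow_succ, mul_neg_one, neg_smul, mul_assoc]
  set sg : ℕ → ℝ := fun n => if n % 4 = 0 ∨ n % 4 = 1 then 1 else -1 with hsgdef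
  have hsg_succ : ∀ n, sg (n+1) = (-1:ℝ)^n * sg n := by
    intro n
    have h4 : n % 4 = 0 ∨ n % 4 = 1 ∨ n % 4 = 2 ∨ n % 4 = 3 := by omega
    rcases h4 with h | h | h | h <;>
      rw [hsgdef] <;>
      simp only [] <;>
      first
      | (rw [Even.neg_one_pow (Nat.even_iff.mpr (by omega))]
         rw [if_pos (by omega), if_pos (by omega)]; ring)
      | (rw [Even.neg_one_pow (Nat.even_iff.mpr (by omega))]
         rw [if_neg (by omega), if_neg (by omega)]; ring)
      | (rw [Odd.neg_one_pow (Nat.odd_iff.mpr (by omega))]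
         rw [if_neg (by omega), if_pos (by omega)]; ring)
      | (rw [Odd.neg_one_pow (Nat.odd_iff.mpr (by omega))]
         rw [if_pos (by omega), if_neg (by omega)]; ring)
  have h_QQ : ∀ n, n ≤ p → L n * L n = (sg n * ∏ k ∈ Finset.range n, ε k) • 1 := by
    intro n
    induction n with
    | zero => intro _; simp [hL0, hsgdef]
    | succ n ih =>
      intro hn
      have hnp : n < p := by omega
      have hL2 := ih (by omega)
      rw [hLsucc]
      calc (L n * f n) * (L n * f n) = L n * ((f n * L n) * f n) := by
            rw [mul_assoc, ← mul_assoc (f n)]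
        _ = L n * (((-1:ℝ)^n • (L n * f n)) * f n) := by rw [h_AC n n le_rfl hnp]
        _ = (-1:ℝ)^n • (L n * L n * (f n * f n)) := by
            rw [smul_mul_assoc, mul_smul_comm, mul_assoc, mul_assoc]
        _ = (-1:ℝ)^n • ((sg n * ∏ k ∈ Finset.range n, ε k) • 1 * (ε n • 1)) := by
            rw [hL2, h_sq n hnp]
        _ = ((-1:ℝ)^n * ((sg n * ∏ k ∈ Finset.range n, ε k) * ε n)) • 1 := by
            rw [smul_mul_assoc, one_mul, smul_smul, smul_smul, mul_assoc]
        _ = (sg (n+1) * ∏ k ∈ Finset.range (n+1), ε k) • 1 := by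
            rw [Finset.prod_range_succ, hsg_succ]; congr 1; ring
  have h_trL : ∀ n, n ≤ p → (L n)ᵀ = sg n • (J * L n * J) := by
    intro n
    induction n with
    | zero =>
      intro _
      rw [hL0, Matrix.transpose_one, mul_one, hJJ]
      simp [hsgdef]
    | succ n ih =>
      intro hn
      have hnp : n < p := by omega
      rw [hLsucc, Matrix.transpose_mul, h_tr n hnp, ih (by omega)]
      calc (J * f n * J) * (sg n • (J * L n * J))
          = sg n • (J * f n * (J * J) * (L n * J)) := by
            rw [mul_smul_comm]
            congr 1
            simp only [mul_assoc]
        _ = sg n • (J * (f n * L n) * J) := by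
            rw [hJJ, mul_one]
            congr 1
            simp only [mul_assoc]
        _ = sg n • (J * ((-1:ℝ)^n • (L n * f n)) * J) := by rw [h_AC n n le_rfl hnp]
        _ = sg (n+1) • (J * (L n * f n) * J) := by
            rw [hsg_succ, mul_smul_comm, smul_mul_assoc, smul_smul, mul_comm (sg n)]
  have hQL : Q = L p := hQ
  have hsgp : sg p = 1 := by simp [hsgdef, hp4]
  have hprodε : (∏ k ∈ Finset.range p, ε k) = 1 := by
    have hfil : (Finset.range p).filter (fun k => q + k ≤ r) = Finset.range (min p (r+1-q)) := by
      ext k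
      simp only [Finset.mem_filter, Finset.mem_range, Finset.mem_inter]
      omega
    calc (∏ k ∈ Finset.range p, ε k)
        = (∏ k ∈ (Finset.range p).filter (fun k => q + k ≤ r), (-1:ℝ)) *
          (∏ k ∈ (Finset.range p).filter (fun k => ¬ (q + k ≤ r)), (1:ℝ)) := by
          rw [hεdef, Finset.prod_ite]
      _ = (-1:ℝ)^(min p (r+1-q)) := by
          rw [hfil, Finset.prod_const, Finset.prod_const, Finset.card_range, one_pow, mul_one]
      _ = 1 := Even.neg_one_pow (Nat.even_iff.mpr (by omega))
  have hQ2 : Q * Q = 1 := by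
    rw [hQL, h_QQ p le_rfl, hsgp, hprodε]; norm_num
  have hQTJ : Qᵀ * J = J * Q := by
    rw [hQL, h_trL p le_rfl, hsgp, one_smul, mul_assoc, hJJ, mul_one]
  have hQv : ∀ v, Q *ᵥ (Q *ᵥ v) = v := by
    intro v; rw [mulVec_mulVec, hQ2, one_mulVec]
  set R : Matrix (Fin (2*l)) (Fin (2*l)) ℝ := f (p-1) with hRdef
  have hRR : R * R = ε (p-1) • 1 := h_sq (p-1) (by omega)
  have hRRv : ∀ v, R *ᵥ (R *ᵥ v) = ε (p-1) • v := by
    intro v; rw [mulVec_mulVec, hRR, smul_mulVec, one_mulVec]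
  have hεne : ε (p-1) ≠ 0 := by
    rcases hε1 (p-1) with h | h <;> rw [h] <;> norm_num
  have hRinj : ∀ u, R *ᵥ u = 0 → u = 0 := by
    intro u h
    have h2 := hRRv u
    rw [h, mulVec_zero] at h2
    rcases smul_eq_zero.mp h2.symm with h3 | h3
    · exact absurd h3 hεne
    · exact h3
  have hRQ : R * Q = -(Q * R) := by
    have hp1 : p - 1 + 1 = p := by omega
    have hQsplit : Q = L (p-1) * R := by
      rw [hQL, ← hp1, hLsucc, hRdef]
      norm_num
    have hodd : Odd (p-1) := Nat.odd_iff.mpr (by omega)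
    have hfL : R * L (p-1) = -(L (p-1) * R) := by
      have h := h_AC (p-1) (p-1) le_rfl (by omega)
      rwa [Odd.neg_one_pow hodd, neg_one_smul] at h
    rw [hQsplit, ← mul_assoc, hfL, neg_mul]
  have hQRv : ∀ v, Q *ᵥ (R *ᵥ v) = -(R *ᵥ (Q *ᵥ v)) := by
    intro v
    have h : Q * R = -(R * Q) := by rw [hRQ, neg_neg]
    rw [mulVec_mulVec, mulVec_mulVec, h, neg_mulVec]
  have hswapP : ∀ u, Q *ᵥ u = u → Q *ᵥ (R *ᵥ u) = -(R *ᵥ u) := by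
    intro u hu; rw [hQRv, hu]
  have hswapM : ∀ u, Q *ᵥ u = -u → Q *ᵥ (R *ᵥ u) = R *ᵥ u := by
    intro u hu; rw [hQRv, hu, mulVec_neg, neg_neg]
  -- existence of eigenvectors
  have hboth : (∃ z : Fin (2*l) → ℝ, z ≠ 0 ∧ Q *ᵥ z = z) ∧
      (∃ z : Fin (2*l) → ℝ, z ≠ 0 ∧ Q *ᵥ z = -z) := by
    set v0 : Fin (2*l) → ℝ := fun _ => 1 with hv0
    have hv0ne : v0 ≠ 0 := by
      intro h
      have := congrFun h ⟨0, by omega⟩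
      simp [hv0] at this
    set u := v0 + Q *ᵥ v0 with hu
    set w := v0 - Q *ᵥ v0 with hw
    have hQu : Q *ᵥ u = u := by
      rw [hu, mulVec_add, hQv]; abel
    have hQw : Q *ᵥ w = -w := by
      rw [hw, mulVec_sub, hQv]; abel
    by_cases hu0 : u = 0
    · have hw0 : w ≠ 0 := by
        intro hw0
        apply hv0ne
        have hsum : u + w = v0 + v0 := by rw [hu, hw]; abel
        rw [hu0, hw0, add_zero] at hsum
        have h2 : (2:ℝ) • v0 = 0 := by rw [two_smul, ← hsum]
        rcases smul_eq_zero.mp h2 with h | h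
        · norm_num at h
        · exact h
      refine ⟨⟨R *ᵥ w, ?_, hswapM w hQw⟩, ⟨w, hw0, hQw⟩⟩
      intro h; exact hw0 (hRinj w h)
    · refine ⟨⟨u, hu0, hQu⟩, ⟨R *ᵥ u, ?_, hswapP u hQu⟩⟩
      intro h; exact hu0 (hRinj u h)
  -- only eigenvalues ±1
  have heig : ∀ (μ : ℝ) (z : Fin (2*l) → ℝ), z ≠ 0 → Q *ᵥ z = μ • z → μ = 1 ∨ μ = -1 := by
    intro μ z hz hzμ
    have h1 : Q *ᵥ (Q *ᵥ z) = z := hQv z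
    rw [hzμ, mulVec_smul, hzμ, smul_smul] at h1
    have h2 : (μ * μ - 1) • z = 0 := by
      rw [sub_smul, one_smul, h1, sub_self]
    rcases smul_eq_zero.mp h2 with h3 | h3
    · exact mul_self_eq_one_iff.mp (by linarith)
    · exact absurd h3 hz
  -- decomposition
  have hdecomp : ∀ z : Fin (2*l) → ℝ,
      Q *ᵥ ((1/2:ℝ) • (z + Q *ᵥ z)) = (1/2:ℝ) • (z + Q *ᵥ z) ∧
      Q *ᵥ ((1/2:ℝ) • (z - Q *ᵥ z)) = -((1/2:ℝ) • (z - Q *ᵥ z)) ∧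
      z = (1/2:ℝ) • (z + Q *ᵥ z) + (1/2:ℝ) • (z - Q *ᵥ z) := by
    intro z
    refine ⟨?_, ?_, ?_⟩
    · rw [mulVec_smul, mulVec_add, hQv]
      congr 1
      abel
    · rw [mulVec_smul, mulVec_sub, hQv, ← smul_neg]
      congr 1
      abel
    · module
  have huniq : ∀ z : Fin (2*l) → ℝ, ∃! w : (Fin (2*l) → ℝ) × (Fin (2*l) → ℝ),
      Q *ᵥ w.1 = w.1 ∧ Q *ᵥ w.2 = -w.2 ∧ z = w.1 + w.2 := by
    intro z
    obtain ⟨h1, h2, h3⟩ := hdecomp z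
    refine ⟨((1/2:ℝ) • (z + Q *ᵥ z), (1/2:ℝ) • (z - Q *ᵥ z)), ⟨h1, h2, h3⟩, ?_⟩
    rintro ⟨a, b⟩ ⟨ha, hb, hab⟩
    simp only at ha hb hab
    have hQz : Q *ᵥ z = a - b := by
      rw [hab, mulVec_add, ha, hb]; abel
    have ha' : a = (1/2:ℝ) • (z + Q *ᵥ z) := by rw [hQz, hab]; module
    have hb' : b = (1/2:ℝ) • (z - Q *ᵥ z) := by rw [hQz, hab]; module
    exact Prod.ext ha' hb'
  -- orthogonality
  have horth : ∀ u v : Fin (2*l) → ℝ, Q *ᵥ u = u → Q *ᵥ v = -v →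
      psInner (2*l) s u v = 0 := by
    intro u v hu hv
    have key : Qᵀ *ᵥ (J *ᵥ v) = -(J *ᵥ v) := by
      rw [mulVec_mulVec, hQTJ, ← mulVec_mulVec, hv, mulVec_neg]
    have h2 : u ⬝ᵥ (J *ᵥ v) = -(u ⬝ᵥ (J *ᵥ v)) := by
      calc u ⬝ᵥ (J *ᵥ v) = (Q *ᵥ u) ⬝ᵥ (J *ᵥ v) := by rw [hu]
        _ = (u ᵥ* Qᵀ) ⬝ᵥ (J *ᵥ v) := by rw [vecMul_transpose]
        _ = u ⬝ᵥ (Qᵀ *ᵥ (J *ᵥ v)) := by rw [← dotProduct_mulVec]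
        _ = u ⬝ᵥ (-(J *ᵥ v)) := by rw [key]
        _ = -(u ⬝ᵥ (J *ᵥ v)) := dotProduct_neg _ _
    have h3 : u ⬝ᵥ (J *ᵥ v) = 0 := by linarith
    exact h3
  -- symmetry and additivity of psInner
  have hvm : ∀ x : Fin (2*l) → ℝ, x ᵥ* J = J *ᵥ x := by
    intro x
    conv_lhs => rw [← hJT]
    rw [vecMul_transpose]
  have hcomm : ∀ a b : Fin (2*l) → ℝ, psInner (2*l) s a b = psInner (2*l) s b a := by
    intro a b
    show a ⬝ᵥ (J *ᵥ b) = b ⬝ᵥ (J *ᵥ a)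
    rw [dotProduct_mulVec, dotProduct_comm, hvm]
  have hadd : ∀ a b c : Fin (2*l) → ℝ,
      psInner (2*l) s a (b + c) = psInner (2*l) s a b + psInner (2*l) s a c := by
    intro a b c
    show a ⬝ᵥ (J *ᵥ (b + c)) = a ⬝ᵥ (J *ᵥ b) + a ⬝ᵥ (J *ᵥ c)
    rw [mulVec_add, dotProduct_add]
  -- eigenspaces
  have hmemP : ∀ x : Fin (2*l) → ℝ,
      x ∈ Module.End.eigenspace (Matrix.toLin' Q) 1 ↔ Q *ᵥ x = x := by
    intro x
    rw [Module.End.mem_eigenspace_iff, Matrix.toLin'_apply, one_smul]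
  have hmemM : ∀ x : Fin (2*l) → ℝ,
      x ∈ Module.End.eigenspace (Matrix.toLin' Q) (-1) ↔ Q *ᵥ x = -x := by
    intro x
    rw [Module.End.mem_eigenspace_iff, Matrix.toLin'_apply, neg_one_smul]
  set Ep := Module.End.eigenspace (Matrix.toLin' Q) 1 with hEp
  set Em := Module.End.eigenspace (Matrix.toLin' Q) (-1) with hEm
  have hcompl : IsCompl Ep Em := by
    refine ⟨Submodule.disjoint_def.mpr ?_, codisjoint_iff.mpr ?_⟩
    · intro x hx1 hx2
      have e1 := (hmemP x).mp hx1
      have e2 := (hmemM x).mp hx2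
      have hxx : x = -x := by conv_lhs => rw [← e1, e2]
      have h2 : (2:ℝ) • x = 0 := by
        rw [two_smul]
        nth_rewrite 2 [hxx]
        simp
      rcases smul_eq_zero.mp h2 with h | h
      · norm_num at h
      · exact h
    · rw [eq_top_iff]
      rintro z -
      obtain ⟨h1, h2, h3⟩ := hdecomp z
      exact Submodule.mem_sup.mpr ⟨_, (hmemP _).mpr h1, _, (hmemM _).mpr h2, h3.symm⟩
  have hsum : Module.finrank ℝ Ep + Module.finrank ℝ Em = 2*l := by
    rw [Submodule.finrank_add_eq_of_isCompl hcompl]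
    simp [Module.finrank_fintype_fun_eq_card]
  have hmapPM : ∀ x ∈ Ep, Matrix.toLin' R x ∈ Em := by
    intro x hx
    rw [hmemM, Matrix.toLin'_apply]
    exact hswapP x ((hmemP x).mp hx)
  have hmapMP : ∀ x ∈ Em, Matrix.toLin' R x ∈ Ep := by
    intro x hx
    rw [hmemP, Matrix.toLin'_apply]
    exact hswapM x ((hmemM x).mp hx)
  have hinj : Function.Injective (Matrix.toLin' R) := by
    intro a b hab
    have h1 : R *ᵥ a = R *ᵥ b := by
      simpa [Matrix.toLin'_apply] using hab
    have h : R *ᵥ (a - b) = 0 := by rw [mulVec_sub, h1, sub_self]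
    exact sub_eq_zero.mp (hRinj _ h)
  have hinjPM : Function.Injective ((Matrix.toLin' R).restrict hmapPM) := by
    intro a b hab
    apply Subtype.ext
    apply hinj
    simpa [LinearMap.restrict_apply] using congrArg Subtype.val hab
  have hinjMP : Function.Injective ((Matrix.toLin' R).restrict hmapMP) := by
    intro a b hab
    apply Subtype.ext
    apply hinj
    simpa [LinearMap.restrict_apply] using congrArg Subtype.val hab
  have hle1 : Module.finrank ℝ Ep ≤ Module.finrank ℝ Em :=
    LinearMap.finrank_le_finrank_of_injective hinjPM
  have hle2 : Module.finrank ℝ Em ≤ Module.finrank ℝ Ep :=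
    LinearMap.finrank_le_finrank_of_injective hinjMP
  -- nondegeneracy
  have hnd1 : ∀ u : Fin (2*l) → ℝ, Q *ᵥ u = u →
      (∀ v : Fin (2*l) → ℝ, Q *ᵥ v = v → psInner (2*l) s u v = 0) → u = 0 := by
    intro u hu hall
    have hz : ∀ z : Fin (2*l) → ℝ, psInner (2*l) s u z = 0 := by
      intro z
      obtain ⟨h1, h2, h3⟩ := hdecomp z
      conv_lhs => rw [h3]
      rw [hadd, hall _ h1, horth u _ hu h2, add_zero]
    have h0 : u ⬝ᵥ u = 0 := by
      have h := hz (J *ᵥ u)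
      have h' : u ⬝ᵥ (J *ᵥ (J *ᵥ u)) = 0 := h
      rwa [mulVec_mulVec, hJJ, one_mulVec] at h'
    exact dotProduct_self_eq_zero.mp h0
  have hnd2 : ∀ u : Fin (2*l) → ℝ, Q *ᵥ u = -u →
      (∀ v : Fin (2*l) → ℝ, Q *ᵥ v = -v → psInner (2*l) s u v = 0) → u = 0 := by
    intro u hu hall
    have hz : ∀ z : Fin (2*l) → ℝ, psInner (2*l) s u z = 0 := by
      intro z
      obtain ⟨h1, h2, h3⟩ := hdecomp z
      conv_lhs => rw [h3]
      rw [hadd, hall _ h2, hcomm, horth _ u h1 hu, add_zero]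
    have h0 : u ⬝ᵥ u = 0 := by
      have h := hz (J *ᵥ u)
      have h' : u ⬝ᵥ (J *ᵥ (J *ᵥ u)) = 0 := h
      rwa [mulVec_mulVec, hJJ, one_mulVec] at h'
    exact dotProduct_self_eq_zero.mp h0
  exact ⟨⟨hboth.1, hboth.2, heig⟩, huniq, horth,
    ⟨by omega, by omega⟩, hnd1, hnd2⟩
end
end

section
/- Let P_1, …, P_m be a Clifford system of signature (m, r) on ℝ^{2l}_s with m ≡ 0 (mod 4) and r ≡ 0 (mod 2), and set P := P_1P_2⋯P_m. Let z ∈ ℝ^{2l} decompose uniquely as z = z_+ + z_− with z_+ ∈ E_+(P), z_− ∈ E_−(P). Then z ∈ M_+ if and only if ⟨z_+, z_+⟩ + ⟨z_−, z_−⟩ = 1 and ⟨P_j z_+, z_−⟩ = 0 for all j ∈ {1, …, m}. -/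
open Matrix

noncomputable section

lemma psJ_sq (n s : ℕ) : psJ n s * psJ n s = 1 := by
  rw [psJ, Matrix.diagonal_mul_diagonal]
  ext i j
  rcases eq_or_ne i j with rfl | hij
  · by_cases h : (i : ℕ) < s <;> simp [h]
  · simp [Matrix.diagonal_apply_ne _ hij, Matrix.one_apply_ne hij]

lemma psInner_comm' (n s : ℕ) (u v : Fin n → ℝ) : psInner n s u v = psInner n s v u := by
  simp only [psInner, psJ, Matrix.mulVec_diagonal, dotProduct]
  congr 1; funext i; ring

lemma psInner_sym (n s : ℕ) (Q : Matrix (Fin n) (Fin n) ℝ)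
    (hQ : Qᵀ = psJ n s * Q * psJ n s) (u v : Fin n → ℝ) :
    psInner n s (Q *ᵥ u) v = psInner n s u (Q *ᵥ v) := by
  unfold psInner
  rw [dotProduct_comm, Matrix.dotProduct_mulVec, ← Matrix.mulVec_transpose, hQ,
      Matrix.mulVec_mulVec, Matrix.mul_assoc (psJ n s * Q), psJ_sq, Matrix.mul_one,
      dotProduct_comm, ← Matrix.mulVec_mulVec]

lemma psInner_neg_right (n s : ℕ) (u v : Fin n → ℝ) :
    psInner n s u (-v) = -psInner n s u v := by
  simp [psInner, Matrix.mulVec_neg]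

lemma psInner_add (n s : ℕ) (u v w x : Fin n → ℝ) :
    psInner n s (u + v) (w + x) =
      psInner n s u w + psInner n s u x + psInner n s v w + psInner n s v x := by
  simp [psInner, Matrix.mulVec_add, dotProduct_add, add_dotProduct]; ring

section ListLemmas
variable {N m : ℕ} (P : ℕ → Matrix (Fin N) (Fin N) ℝ)

lemma moveThrough
    (hanti : ∀ i ∈ Finset.Icc 1 m, ∀ j ∈ Finset.Icc 1 m, i ≠ j → P i * P j = -(P j * P i))
    (j : ℕ) (hj : j ∈ Finset.Icc 1 m) :
    ∀ L : List ℕ, (∀ k ∈ L, k ∈ Finset.Icc 1 m) → j ∉ L →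
      P j * (L.map P).prod = ((-1:ℝ)^L.length) • ((L.map P).prod * P j) := by
  intro L
  induction L with
  | nil => intro _ _; simp
  | cons a T ih =>
    intro hL hjL
    have ha := hL a (List.mem_cons_self (a := a) (l := T))
    have hT : ∀ k ∈ T, k ∈ Finset.Icc 1 m := fun k hk => hL k (List.mem_cons_of_mem a hk)
    have hja : j ≠ a := fun h => hjL (h ▸ List.mem_cons_self (a := a) (l := T))
    have hjT : j ∉ T := fun h => hjL (List.mem_cons_of_mem a h)
    rw [List.map_cons, List.prod_cons, ← mul_assoc, hanti j hj a ha hja, neg_mul,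
        mul_assoc, ih hT hjT, mul_smul_comm, ← neg_smul, List.length_cons, pow_succ]
    congr 1
    · ring
    · rw [mul_assoc]

lemma moveThrough'
    (hanti : ∀ i ∈ Finset.Icc 1 m, ∀ j ∈ Finset.Icc 1 m, i ≠ j → P i * P j = -(P j * P i))
    (j : ℕ) (hj : j ∈ Finset.Icc 1 m)
    (L : List ℕ) (hL : ∀ k ∈ L, k ∈ Finset.Icc 1 m) (hjL : j ∉ L) :
      (L.map P).prod * P j = ((-1:ℝ)^L.length) • (P j * (L.map P).prod) := by
  rw [moveThrough P hanti j hj L hL hjL, smul_smul, ← pow_add, ← two_mul,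
      pow_mul, neg_one_sq, one_pow, one_smul]

lemma revProd
    (hanti : ∀ i ∈ Finset.Icc 1 m, ∀ j ∈ Finset.Icc 1 m, i ≠ j → P i * P j = -(P j * P i)) :
    ∀ L : List ℕ, (∀ k ∈ L, k ∈ Finset.Icc 1 m) → L.Nodup →
      ((L.reverse).map P).prod = ((-1:ℝ)^(L.length.choose 2)) • (L.map P).prod := by
  intro L
  induction L with
  | nil => intro _ _; simp
  | cons a T ih =>
    intro hL hnd
    have ha := hL a (List.mem_cons_self (a := a) (l := T))
    have hT : ∀ k ∈ T, k ∈ Finset.Icc 1 m := fun k hk => hL k (List.mem_cons_of_mem a hk)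
    have haT : a ∉ T := (List.nodup_cons.mp hnd).1
    have hndT : T.Nodup := (List.nodup_cons.mp hnd).2
    rw [List.reverse_cons, List.map_append, List.prod_append, List.map_singleton,
        List.prod_singleton, ih hT hndT, smul_mul_assoc,
        moveThrough' P hanti a ha T hT haT, List.map_cons, List.prod_cons,
        smul_smul, ← pow_add, List.length_cons]
    congr 2
    rw [Nat.choose_succ_succ, Nat.choose_one_right, add_comm]

lemma conjProd (J : Matrix (Fin N) (Fin N) ℝ) (hJ : J * J = 1) :
    ∀ L : List ℕ, (∀ k ∈ L, k ∈ Finset.Icc 1 m) →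
      (L.map fun i => J * P i * J).prod = J * (L.map P).prod * J := by
  intro L
  induction L with
  | nil => intro _; simpa using hJ.symm
  | cons a T ih =>
    intro hL
    have hT : ∀ k ∈ T, k ∈ Finset.Icc 1 m := fun k hk => hL k (List.mem_cons_of_mem a hk)
    rw [List.map_cons, List.prod_cons, List.map_cons, List.prod_cons, ih hT]
    rw [show J * P a * J * (J * (T.map P).prod * J)
        = J * P a * (J * J) * ((T.map P).prod * J) by noncomm_ring, hJ, mul_one]
    noncomm_ring

end ListLemmas

/-- for a Clifford system with `m ≡ 0 (mod 4)`, `r ≡ 0 (mod 2)`,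
`P = P_1 ⋯ P_m`, and `z = z₊ + z₋` with `z₊ ∈ E₊(P)`, `z₋ ∈ E₋(P)`: `z ∈ M₊` iff
`⟨z₊, z₊⟩ + ⟨z₋, z₋⟩ = 1` and `⟨P_j z₊, z₋⟩ = 0` for all `j ∈ {1, …, m}`. -/
theorem mem_Mplus_iff (l s m r : ℕ) (hl : 0 < l) (hs : s ≤ 2 * l)
    (hm : 2 ≤ m) (hm4 : m % 4 = 0) (hr : r ≤ m) (hr2 : r % 2 = 0)
    (P : ℕ → Matrix (Fin (2 * l)) (Fin (2 * l)) ℝ)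
    (hP : IsCliffordSystem l s m r P)
    (Pm : Matrix (Fin (2 * l)) (Fin (2 * l)) ℝ)
    (hPm : Pm = ((List.range m).map fun k => P (1 + k)).prod)
    (z zp zm : Fin (2 * l) → ℝ)
    (hzp : Pm *ᵥ zp = zp) (hzm : Pm *ᵥ zm = -zm) (hz : z = zp + zm) :
    (psInner (2 * l) s z z = 1 ∧
      ∀ j ∈ Finset.Icc 1 m, psInner (2 * l) s (P j *ᵥ z) z = 0) ↔
    (psInner (2 * l) s zp zp + psInner (2 * l) s zm zm = 1 ∧
      ∀ j ∈ Finset.Icc 1 m, psInner (2 * l) s (P j *ᵥ zp) zm = 0) := by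
  obtain ⟨hsym, hrel⟩ := hP
  -- anticommutation for distinct indices
  have hanti : ∀ i ∈ Finset.Icc 1 m, ∀ j ∈ Finset.Icc 1 m, i ≠ j →
      P i * P j = -(P j * P i) := by
    intro i hi j hj hij
    have h := hrel i hi j hj
    rw [cliffEta, if_neg hij] at h
    simp only [mul_zero, zero_smul] at h
    exact eq_neg_of_add_eq_zero_left h
  set L : List ℕ := List.range' 1 m with hLdef
  have hLmem : ∀ k ∈ L, k ∈ Finset.Icc 1 m := by
    intro k hk
    rw [hLdef, List.mem_range'] at hk
    obtain ⟨i, hi, rfl⟩ := hk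
    simp only [Finset.mem_Icc]; omega
  have hPmL : Pm = (L.map P).prod := by
    rw [hPm, hLdef, List.range'_eq_map_range, List.map_map]
    rfl
  -- Pm is symmetric w.r.t. the pseudo-inner product
  have heven : Even (m.choose 2) := by
    obtain ⟨k, hk⟩ := Nat.dvd_of_mod_eq_zero hm4
    rw [Nat.choose_two_right]
    refine ⟨k * (m - 1), ?_⟩
    have hm' : m * (m - 1) = 2 * (k * (m - 1) + k * (m - 1)) := by rw [hk]; ring
    rw [hm', Nat.mul_div_cancel_left _ (by norm_num)]
  have hPmT : Pmᵀ = psJ (2 * l) s * Pm * psJ (2 * l) s := by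
    rw [hPmL, Matrix.transpose_list_prod]
    have hmapT : (L.map P).map Matrix.transpose
        = L.map fun i => psJ (2 * l) s * P i * psJ (2 * l) s := by
      rw [List.map_map]
      exact List.map_congr_left (fun a ha => hsym a (hLmem a ha))
    rw [hmapT, ← List.map_reverse,
        conjProd P (psJ (2 * l) s) (psJ_sq (2 * l) s) L.reverse
          (fun k hk => hLmem k (List.mem_reverse.mp hk)),
        revProd P hanti L hLmem (by rw [hLdef]; exact List.nodup_range')]
    rw [show L.length = m by rw [hLdef, List.length_range'], heven.neg_one_pow, one_smul]
  -- orthogonality of eigenvectors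
  have horth : ∀ u v, Pm *ᵥ u = u → Pm *ᵥ v = -v → psInner (2 * l) s u v = 0 := by
    intro u v hu hv
    have h1 : psInner (2 * l) s u v = psInner (2 * l) s (Pm *ᵥ u) v := by rw [hu]
    rw [psInner_sym (2 * l) s Pm hPmT, hv, psInner_neg_right] at h1
    linarith
  -- anticommutation of P j with Pm
  have hcomPm : ∀ j ∈ Finset.Icc 1 m, P j * Pm = -(Pm * P j) := by
    intro j hj
    obtain ⟨hj1, hj2⟩ := Finset.mem_Icc.mp hj
    set A : List ℕ := List.range' 1 (j - 1) with hA
    set B : List ℕ := List.range' (j + 1) (m - j) with hB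
    have hsplit : L = A ++ j :: B := by
      rw [hLdef, hA, hB]
      have h2 : j - 1 + (m - j + 1) = m := by omega
      have h1 : 1 + (j - 1) = j := by omega
      have key := List.range'_append_1 (s := 1) (m := j - 1) (n := m - j + 1)
      rw [h1, h2, List.range'_succ] at key
      exact key.symm
    have hAmem : ∀ k ∈ A, k ∈ Finset.Icc 1 m := by
      intro k hk; rw [hA, List.mem_range'] at hk
      obtain ⟨i, hi, rfl⟩ := hk; simp only [Finset.mem_Icc]; omega
    have hBmem : ∀ k ∈ B, k ∈ Finset.Icc 1 m := by
      intro k hk; rw [hB, List.mem_range'] at hk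
      obtain ⟨i, hi, rfl⟩ := hk; simp only [Finset.mem_Icc]; omega
    have hjA : j ∉ A := by
      intro hk; rw [hA, List.mem_range'] at hk
      obtain ⟨i, hi, hji⟩ := hk; omega
    have hjB : j ∉ B := by
      intro hk; rw [hB, List.mem_range'] at hk
      obtain ⟨i, hi, hji⟩ := hk; omega
    have hPmdec : Pm = (A.map P).prod * (P j * (B.map P).prod) := by
      rw [hPmL, hsplit, List.map_append, List.prod_append, List.map_cons, List.prod_cons]
    have hAlen : A.length = j - 1 := by rw [hA, List.length_range']
    have hBlen : B.length = m - j := by rw [hB, List.length_range']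
    have e1 : P j * Pm
        = ((-1:ℝ)^(j - 1)) • ((A.map P).prod * (P j * (P j * (B.map P).prod))) := by
      rw [hPmdec, ← mul_assoc, moveThrough P hanti j hj A hAmem hjA, hAlen,
          smul_mul_assoc, mul_assoc]
    have e2 : Pm * P j
        = ((-1:ℝ)^(m - j)) • ((A.map P).prod * (P j * (P j * (B.map P).prod))) := by
      rw [hPmdec, mul_assoc, mul_assoc, moveThrough' P hanti j hj B hBmem hjB, hBlen,
          mul_smul_comm, mul_smul_comm]
    rw [e1, e2, ← neg_smul]
    congr 1
    have h2 : ((-1:ℝ))^(j - 1) * (-1)^(m - j) = -1 := by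
      rw [← pow_add, show (j - 1) + (m - j) = m - 1 by omega]
      exact Odd.neg_one_pow (by rw [Nat.odd_iff]; omega)
    have h3 : ((-1:ℝ))^(m - j) * (-1)^(m - j) = 1 := by
      rw [← pow_add, ← two_mul, pow_mul, neg_one_sq, one_pow]
    linear_combination (-1:ℝ)^(m - j) * h2 - (-1:ℝ)^(j - 1) * h3
  -- eigenvector mapping
  have hEm : ∀ j ∈ Finset.Icc 1 m, Pm *ᵥ (P j *ᵥ zp) = -(P j *ᵥ zp) := by
    intro j hj
    have hc : Pm * P j = -(P j * Pm) := by
      rw [hcomPm j hj, neg_neg]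
    rw [Matrix.mulVec_mulVec, hc, Matrix.neg_mulVec, ← Matrix.mulVec_mulVec, hzp]
  have hEp : ∀ j ∈ Finset.Icc 1 m, Pm *ᵥ (P j *ᵥ zm) = P j *ᵥ zm := by
    intro j hj
    have hc : Pm * P j = -(P j * Pm) := by
      rw [hcomPm j hj, neg_neg]
    rw [Matrix.mulVec_mulVec, hc, Matrix.neg_mulVec, ← Matrix.mulVec_mulVec, hzm,
        Matrix.mulVec_neg, neg_neg]
  -- norm identity
  have hzz : psInner (2 * l) s z z
      = psInner (2 * l) s zp zp + psInner (2 * l) s zm zm := by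
    rw [hz, psInner_add, horth zp zm hzp hzm,
        psInner_comm' (2 * l) s zm zp, horth zp zm hzp hzm]
    ring
  -- the P j identity
  have hpj : ∀ j ∈ Finset.Icc 1 m,
      psInner (2 * l) s (P j *ᵥ z) z = 2 * psInner (2 * l) s (P j *ᵥ zp) zm := by
    intro j hj
    have h1 : psInner (2 * l) s (P j *ᵥ zp) zp = 0 := by
      rw [psInner_comm']
      exact horth zp (P j *ᵥ zp) hzp (hEm j hj)
    have h2 : psInner (2 * l) s (P j *ᵥ zm) zm = 0 :=
      horth (P j *ᵥ zm) zm (hEp j hj) hzm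
    have h3 : psInner (2 * l) s (P j *ᵥ zm) zp = psInner (2 * l) s (P j *ᵥ zp) zm := by
      rw [psInner_sym (2 * l) s (P j) (hsym j hj), psInner_comm']
    rw [hz, Matrix.mulVec_add, psInner_add, h1, h2, h3]
    ring
  constructor
  · rintro ⟨h1, h2⟩
    refine ⟨by rw [← hzz]; exact h1, fun j hj => ?_⟩
    have := h2 j hj
    rw [hpj j hj] at this
    linarith
  · rintro ⟨h1, h2⟩
    refine ⟨by rw [hzz]; exact h1, fun j hj => ?_⟩
    rw [hpj j hj, h2 j hj]
    ring
end
end
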